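/- arXiv:1312.4022 — 14 statements merged into one kernel-verified Lean document; each statement's English description precedes it below -/
import Mathlib

section
/- If R is a central linear Armendariz ring, then R is abelian, i.e., every idempotent element of R lies in the center of R. -/
open Polynomial

/-- A ring `R` is *central linear Armendariz* if whenever the product of two linear
polynomials `(a₀ + a₁x)(b₀ + b₁x) = 0` in `R[x]`, each product `aᵢbⱼ` is central in `R`. -/
def CentralLinearArmendariz (R : Type*) [Ring R] : Prop :=
  ∀ a₀ a₁ b₀ b₁ : R,
    (C a₀ + C a₁ * X) * (C b₀ + C b₁ * X) = 0 →
      a₀ * b₀ ∈ Set.center R ∧ a₀ * b₁ ∈ Set.center R ∧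
      a₁ * b₀ ∈ Set.center R ∧ a₁ * b₁ ∈ Set.center R

private lemma lin_mul_zero {R : Type*} [Ring R] (a₀ a₁ b₀ b₁ : R) (h1 : a₀*b₀ = 0)
    (h2 : a₀*b₁ + a₁*b₀ = 0) (h3 : a₁*b₁ = 0) :
    ((C a₀ + C a₁ * X) * (C b₀ + C b₁ * X) : R[X]) = 0 := by
  have : ((C a₀ + C a₁ * X) * (C b₀ + C b₁ * X) : R[X])
      = C (a₀*b₀) + C (a₀*b₁ + a₁*b₀) * X + C (a₁*b₁) * X^2 := by
    simp only [add_mul, mul_add, mul_assoc, X_mul_C, C_mul, C_add, sq]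
    rw [← mul_assoc X (C b₁) X, X_mul_C, mul_assoc]
    abel
  rw [this, h1, h2, h3]
  simp

/-- If `R` is a central linear Armendariz ring, then `R` is abelian, i.e. every
idempotent of `R` is central. -/
theorem stmt_0 (R : Type*) [Ring R] (h : CentralLinearArmendariz R) :
    ∀ e : R, IsIdempotentElem e → e ∈ Set.center R := by
  intro e he
  have hee : e * e = e := he
  have h1e : e * (1 - e) = 0 := by rw [mul_sub, mul_one, hee, sub_self]
  have he1 : (1 - e) * e = 0 := by rw [sub_mul, one_mul, hee, sub_self]
  have h11 : (1 - e) * (1 - e) = 1 - e := by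
    rw [mul_sub, mul_one, sub_mul, one_mul, hee]; abel
  rw [Semigroup.mem_center_iff]
  intro r
  -- Step 1: e * (r * (1 - e)) = 0
  have key1 : e * (r * (1 - e)) = 0 := by
    set u := e * (r * (1 - e)) with hu
    have heu : e * u = u := by rw [hu, ← mul_assoc, hee]
    have hu1 : u * (1 - e) = u := by rw [hu, mul_assoc, mul_assoc, h11]
    have h1u : (1 - e) * u = 0 := by rw [hu, ← mul_assoc, he1, zero_mul]
    have huu : u * u = 0 := by
      have h' : u * ((1 - e) * u) = 0 := by rw [h1u, mul_zero]
      rwa [← mul_assoc, hu1] at h'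
    have hz := lin_mul_zero e u (1 - e) (-u) h1e
      (by rw [mul_neg, heu, hu1, neg_add_cancel])
      (by rw [mul_neg, huu, neg_zero])
    obtain ⟨-, -, hc, -⟩ := h e u (1 - e) (-u) hz
    rw [hu1] at hc
    have hcomm := ((Set.mem_center_iff.mp hc).comm (1 - e)).eq
    rw [hu1, h1u] at hcomm
    exact hcomm
  -- Step 2: (1 - e) * (r * e) = 0
  have key2 : (1 - e) * (r * e) = 0 := by
    set v := (1 - e) * (r * e) with hv
    have h1v : (1 - e) * v = v := by rw [hv, ← mul_assoc, h11]
    have hve : v * e = v := by rw [hv, mul_assoc, mul_assoc, hee]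
    have hev : e * v = 0 := by rw [hv, ← mul_assoc, h1e, zero_mul]
    have hvv : v * v = 0 := by
      have h' : v * (e * v) = 0 := by rw [hev, mul_zero]
      rwa [← mul_assoc, hve] at h'
    have hz := lin_mul_zero (1 - e) v e (-v) he1
      (by rw [mul_neg, h1v, hve, neg_add_cancel])
      (by rw [mul_neg, hvv, neg_zero])
    obtain ⟨-, -, hc, -⟩ := h (1 - e) v e (-v) hz
    rw [hve] at hc
    have hcomm := ((Set.mem_center_iff.mp hc).comm e).eq
    rw [hve, hev] at hcomm
    exact hcomm
  rw [mul_sub, mul_one, mul_sub, sub_eq_zero] at key1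
  rw [sub_mul, one_mul, sub_eq_zero] at key2
  exact key2.trans key1.symm
end

section
/- Let R be a nontrivial ring (1 ≠ 0) and n ≥ 2 a natural number. Then the full matrix ring Mₙ(R) of n×n matrices over R is not central linear Armendariz. -/
open Polynomial

open Polynomial in
private lemma lin_mul_eq_zero {S : Type*} [Ring S] (a₀ a₁ b₀ b₁ : S)
    (h00 : a₀ * b₀ = 0) (hx : a₀ * b₁ + a₁ * b₀ = 0) (h11 : a₁ * b₁ = 0) :
    (C a₀ + C a₁ * X) * (C b₀ + C b₁ * X) = 0 := by
  have expand : (C a₀ + C a₁ * X) * (C b₀ + C b₁ * X)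
      = C (a₀ * b₀) + C (a₀ * b₁ + a₁ * b₀) * X + C (a₁ * b₁) * (X * X) := by
    rw [mul_add, add_mul, add_mul, mul_assoc (C a₁) X (C b₀), X_mul_C,
      ← mul_assoc (C a₁) (C b₀) X, ← C_mul, ← C_mul,
      ← mul_assoc (C a₀) (C b₁) X, ← C_mul,
      mul_assoc (C a₁) X (C b₁ * X), ← mul_assoc X (C b₁) X, X_mul_C,
      mul_assoc (C b₁) X X, ← mul_assoc (C a₁) (C b₁) (X * X), ← C_mul,
      map_add, add_mul]
    abel
  rw [expand, h00, hx, h11, C_0, zero_mul, zero_mul, add_zero, add_zero]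

/-- For a nontrivial ring `R` and `n ≥ 2`, the full matrix ring `Mₙ(R)` is not
central linear Armendariz. -/
theorem stmt_1 (R : Type*) [Ring R] [Nontrivial R] (n : ℕ) (hn : 2 ≤ n) :
    ¬ CentralLinearArmendariz (Matrix (Fin n) (Fin n) R) := by
  intro h
  have h0 : 0 < n := by omega
  have h1 : 1 < n := by omega
  set i0 : Fin n := ⟨0, h0⟩
  set i1 : Fin n := ⟨1, h1⟩
  have hne : i0 ≠ i1 := by simp [i0, i1, Fin.ext_iff]
  set E00 : Matrix (Fin n) (Fin n) R := Matrix.single i0 i0 1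
  set E01 : Matrix (Fin n) (Fin n) R := Matrix.single i0 i1 1
  set E10 : Matrix (Fin n) (Fin n) R := Matrix.single i1 i0 1
  have key : (C E00 + C E01 * X) * (C E10 + C (-E00) * X) = 0 := by
    apply lin_mul_eq_zero
    · simp [E00, E10, i0, i1, Fin.ext_iff]
    · have e2 : E00 * E00 = E00 := by simp [E00]
      have e3 : E01 * E10 = E00 := by simp [E00, E01, E10]
      rw [mul_neg, e2, e3, neg_add_cancel]
    · have : E01 * E00 = 0 := by simp [E00, E01, i0, i1, Fin.ext_iff]
      rw [mul_neg, this, neg_zero]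
  obtain ⟨-, -, hcen, -⟩ := h E00 E01 E10 (-E00) key
  have e3 : E01 * E10 = E00 := by simp [E00, E01, E10]
  rw [e3] at hcen
  have hc : E00 * E01 = E01 * E00 := (Set.mem_center_iff.mp hcen).1 E01
  have l1 : E00 * E01 = E01 := by simp [E00, E01, E10]
  have l2 : E01 * E00 = 0 := by simp [E00, E01, E10, i0, i1, Fin.ext_iff]
  rw [l1, l2] at hc
  have := congrFun (congrFun hc i0) i1
  simp [E01, Matrix.single_apply_same] at this
end

section
/- Let R be a nontrivial ring (1 ≠ 0) and n ≥ 2 a natural number. Then the ring Tₙ(R) of n×n upper triangular matrices over R is not central linear Armendariz. -/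
open Polynomial

/-- The ring `Tₙ(R)` of `n × n` upper triangular matrices over `R`,
as a subring of the full matrix ring. -/
def upperTriangularRing (n : ℕ) (R : Type*) [Ring R] :
    Subring (Matrix (Fin n) (Fin n) R) where
  carrier := {M | ∀ i j : Fin n, j < i → M i j = 0}
  zero_mem' _ _ _ := rfl
  one_mem' i j hij := Matrix.one_apply_ne' (by exact fun h => absurd h (ne_of_lt hij))
  add_mem' h₁ h₂ i j hij := by
    simp [Matrix.add_apply, h₁ i j hij, h₂ i j hij]
  neg_mem' h i j hij := by simp [Matrix.neg_apply, h i j hij]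
  mul_mem' {M N} hM hN i j hij := by
    rw [Matrix.mul_apply]
    apply Finset.sum_eq_zero
    intro k _
    by_cases hki : k < i
    · rw [hM i k hki, zero_mul]
    · rw [hN k j (lt_of_lt_of_le hij (not_lt.mp hki)), mul_zero]

set_option maxHeartbeats 1000000 in
/-- For a nontrivial ring `R` and `n ≥ 2`, the ring `Tₙ(R)` of `n × n` upper triangular
matrices over `R` is not central linear Armendariz. -/
theorem stmt_2 (R : Type*) [Ring R] [Nontrivial R] (n : ℕ) (hn : 2 ≤ n) :
    ¬ CentralLinearArmendariz (upperTriangularRing n R) := by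
  intro h
  have h2 : (1 : ℕ) < n := by omega
  set i0 : Fin n := ⟨0, by omega⟩ with hi0
  set i1 : Fin n := ⟨1, by omega⟩ with hi1
  have h01 : i0 ≠ i1 := by simp [hi0, hi1, Fin.ext_iff]
  have memE : ∀ (i j : Fin n), i ≤ j →
      Matrix.single i j (1 : R) ∈ upperTriangularRing n R := by
    intro i j hij k l hlk
    apply Matrix.single_apply_of_ne
    rintro ⟨rfl, rfl⟩
    exact absurd hlk (not_lt.2 hij)
  set A0 : upperTriangularRing n R := ⟨Matrix.single i0 i0 1, memE _ _ le_rfl⟩ with hA0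
  set A1 : upperTriangularRing n R := ⟨Matrix.single i0 i1 1, memE _ _ (le_of_lt (by simp only [hi0, hi1, Fin.mk_lt_mk]; omega))⟩ with hA1
  set B0 : upperTriangularRing n R := ⟨Matrix.single i1 i1 1, memE _ _ le_rfl⟩ with hB0
  have e1 : A0 * B0 = 0 := by
    apply Subtype.ext
    simpa using (Matrix.single_mul_single_of_ne (c := (1 : R)) i0 i0 i1 h01 1 : Matrix.single i0 i0 (1 : R) * Matrix.single i1 i1 1 = 0)
  have e2 : A0 * A1 = A1 := by
    apply Subtype.ext
    exact (Matrix.single_mul_single_same (c := (1 : R)) i0 i0 i1 1).trans (by rw [mul_one])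
  have e3 : A1 * B0 = A1 := by
    apply Subtype.ext
    exact (Matrix.single_mul_single_same (c := (1 : R)) i0 i1 i1 1).trans (by rw [mul_one])
  have e4 : A1 * A1 = 0 := by
    apply Subtype.ext
    simpa using (Matrix.single_mul_single_of_ne (c := (1 : R)) i0 i1 i0 h01.symm 1 : Matrix.single i0 i1 (1 : R) * Matrix.single i0 i1 1 = 0)
  have key : (C A0 + C A1 * X) * (C B0 + C (-A1) * X) = 0 := by
    have expand : (C A0 + C A1 * X) * (C B0 + C (-A1) * X)
        = C (A0 * B0) + C (A0 * (-A1) + A1 * B0) * X + C (A1 * (-A1)) * X ^ 2 := by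
      simp only [C_add, C_mul, C_neg]
      noncomm_ring
      simp only [X_mul, mul_assoc]
      abel
    rw [expand, e1, e3, mul_neg, mul_neg, e2, e4, neg_zero, neg_add_cancel]
    simp
  obtain ⟨-, hc, -, -⟩ := h A0 A1 B0 (-A1) key
  have hcomm := (Semigroup.mem_center_iff.mp hc) A0
  have hL : A0 * (A0 * -A1) = -A1 := by rw [mul_neg, mul_neg, e2, e2]
  have hR : (A0 * -A1) * A0 = 0 := by
    rw [mul_neg, e2, neg_mul]
    have : A1 * A0 = 0 := by
      apply Subtype.ext
      simpa using (Matrix.single_mul_single_of_ne (c := (1 : R)) i0 i1 i0 h01.symm 1 : Matrix.single i0 i1 (1 : R) * Matrix.single i0 i0 1 = 0)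
    rw [this, neg_zero]
  have hA1z : A1 = 0 := by
    have := hcomm
    rw [hL, hR] at this
    simpa using this.symm
  have : Matrix.single i0 i1 (1 : R) = 0 := congrArg Subtype.val hA1z
  have := congrFun (congrFun this i0) i1
  simp at this
end

section
/- Let R be a von Neumann regular ring. Then the following conditions are equivalent: (1) R is Armendariz; (2) R is reduced; (3) R is central linear Armendariz; (4) R is linear Armendariz; (5) R is semicommutative. -/
open Polynomial

/-- A ring `R` is *linear Armendariz* if whenever the product of two linear
polynomials `(a₀ + a₁x)(b₀ + b₁x) = 0` in `R[x]`, each product `aᵢbⱼ` is zero. -/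
def LinearArmendariz (R : Type*) [Ring R] : Prop :=
  ∀ a₀ a₁ b₀ b₁ : R,
    (C a₀ + C a₁ * X) * (C b₀ + C b₁ * X) = 0 →
      a₀ * b₀ = 0 ∧ a₀ * b₁ = 0 ∧ a₁ * b₀ = 0 ∧ a₁ * b₁ = 0

/-- A ring `R` is *Armendariz* if whenever `f g : R[x]` satisfy `f * g = 0`,
every product of a coefficient of `f` with a coefficient of `g` is zero. -/
def Armendariz (R : Type*) [Ring R] : Prop :=
  ∀ f g : R[X], f * g = 0 → ∀ i j : ℕ, f.coeff i * g.coeff j = 0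

lemma lin_mul {R : Type*} [Ring R] (a₀ a₁ b₀ b₁ : R) :
    (C a₀ + C a₁ * X) * (C b₀ + C b₁ * X) =
      C (a₀*b₀) + C (a₀*b₁ + a₁*b₀) * X + C (a₁*b₁) * X^2 := by
  have h1 : (C a₁ * X) * C b₀ = C (a₁ * b₀) * X := by
    rw [mul_assoc, X_mul, ← mul_assoc, ← C_mul]
  have h2 : (C a₁ * X) * (C b₁ * X) = C (a₁ * b₁) * X^2 := by
    rw [mul_assoc, X_mul, ← mul_assoc, ← mul_assoc, ← C_mul, mul_assoc, sq]
  rw [add_mul, mul_add, mul_add, h1, h2, ← mul_assoc, ← C_mul, ← C_mul, map_add, add_mul]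
  abel

lemma sq_red {R : Type*} [Ring R] (h : ∀ a : R, a * a = 0 → a = 0) : IsReduced R := by
  have key : ∀ n : ℕ, ∀ x : R, x ^ n = 0 → x = 0 := by
    intro n
    induction n using Nat.strong_induction_on with
    | _ n ih =>
      intro x hn
      match n, hn with
      | 0, hn => simpa using congrArg (x * ·) hn
      | 1, hn => simpa using hn
      | (n+2), hn =>
        have h1 : x^(n+1) * x^(n+1) = 0 := by
          rw [← pow_add]
          have he : n + 1 + (n + 1) = (n + 2) + n := by omega
          rw [he, pow_add, hn, zero_mul]
        exact ih (n+1) (by omega) x (h _ h1)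
  exact ⟨fun x ⟨n, hn⟩ => key n x hn⟩

section Red
variable {R : Type*} [Ring R]

lemma red_comm (hred : IsReduced R) (a b : R) (h : a * b = 0) : b * a = 0 := by
  haveI := hred
  apply IsReduced.eq_zero
  refine ⟨2, ?_⟩
  have : (b * a) ^ 2 = b * (a * b) * a := by rw [sq]; noncomm_ring
  rw [this, h, mul_zero, zero_mul]

lemma red_semicomm (hred : IsReduced R) (a b : R) (h : a * b = 0) (r : R) : a * r * b = 0 := by
  haveI := hred
  apply IsReduced.eq_zero
  refine ⟨2, ?_⟩
  have hba := red_comm hred a b h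
  have : (a * r * b) ^ 2 = a * r * (b * a) * (r * b) := by rw [sq]; noncomm_ring
  rw [this, hba, mul_zero, zero_mul]

lemma red_sq_cancel (hred : IsReduced R) (a b : R) (h : a * (b * b) = 0) : a * b = 0 := by
  have h1 : b * a * b = 0 := by
    haveI := hred
    apply IsReduced.eq_zero
    refine ⟨2, ?_⟩
    have : (b * a * b) ^ 2 = b * (a * (b * b)) * (a * b) := by rw [sq]; noncomm_ring
    rw [this, h, mul_zero, zero_mul]
  haveI := hred
  apply IsReduced.eq_zero
  refine ⟨2, ?_⟩
  have : (a * b) ^ 2 = a * (b * a * b) := by rw [sq]; noncomm_ring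
  rw [this, h1, mul_zero]
end Red

lemma red_armendariz {R : Type*} [Ring R] (hred : IsReduced R) :
    ∀ f g : R[X], f * g = 0 → ∀ i j : ℕ, f.coeff i * g.coeff j = 0 := by
  intro f g hfg
  have key : ∀ n : ℕ, ∀ i j : ℕ, i + j = n → f.coeff i * g.coeff j = 0 := by
    intro n
    induction n using Nat.strong_induction_on with
    | _ n ihn =>
      have inner : ∀ j : ℕ, j ≤ n → f.coeff (n - j) * g.coeff j = 0 := by
        intro j
        induction j using Nat.strong_induction_on with
        | _ j ihj =>
          intro hj
          have hS : ∑ p ∈ Finset.HasAntidiagonal.antidiagonal n, f.coeff p.1 * g.coeff p.2 = 0 := by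
            have h0 := (Polynomial.coeff_mul f g n).symm
            rwa [hfg, coeff_zero] at h0
          have hS2 : ∑ p ∈ Finset.HasAntidiagonal.antidiagonal n,
              f.coeff p.1 * g.coeff p.2 * g.coeff j = 0 := by
            have h := congrArg (· * g.coeff j) hS
            simpa [Finset.sum_mul] using h
          have heq : ∑ p ∈ Finset.HasAntidiagonal.antidiagonal n,
              f.coeff p.1 * g.coeff p.2 * g.coeff j
              = f.coeff (n - j) * g.coeff j * g.coeff j := by
            refine Finset.sum_eq_single_of_mem (n - j, j) ?_ ?_
            · rw [Finset.HasAntidiagonal.mem_antidiagonal]; omega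
            · rintro ⟨i', j'⟩ hp hne
              rw [Finset.HasAntidiagonal.mem_antidiagonal] at hp
              simp only at hp ⊢
              rcases lt_trichotomy j' j with hlt | heq | hgt
              · have h0 : f.coeff i' * g.coeff j' = 0 := by
                  have := ihj j' hlt (by omega)
                  rwa [show n - j' = i' by omega] at this
                rw [h0, zero_mul]
              · exact absurd (by simp [heq]; omega) hne
              · have h0 : f.coeff i' * g.coeff j = 0 := ihn (i' + j) (by omega) i' j rfl
                exact red_semicomm hred _ _ h0 _
          have hsingle : f.coeff (n - j) * g.coeff j * g.coeff j = 0 := heq ▸ hS2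
          exact red_sq_cancel hred _ _ (by rwa [mul_assoc] at hsingle)
      intro i j hij
      have := inner j (by omega)
      rwa [show n - j = i by omega] at this
  exact fun i j => key (i + j) i j rfl

/-- For a von Neumann regular ring `R`, the conditions Armendariz, reduced,
central linear Armendariz, linear Armendariz and semicommutative are all equivalent. -/
theorem stmt_3 (R : Type*) [Ring R] (hvnr : ∀ a : R, ∃ x : R, a = a * x * a) :
    [Armendariz R,
     IsReduced R,
     CentralLinearArmendariz R,
     LinearArmendariz R,
     ∀ a b : R, a * b = 0 → ∀ r : R, a * r * b = 0].TFAE := by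
  tfae_have 1 → 4
  | hA, a₀, a₁, b₀, b₁, h =>
    ⟨by simpa using hA _ _ h 0 0, by simpa using hA _ _ h 0 1,
     by simpa using hA _ _ h 1 0, by simpa using hA _ _ h 1 1⟩
  tfae_have 4 → 3
  | h4, a₀, a₁, b₀, b₁, h => by
    obtain ⟨p, q, r, s⟩ := h4 _ _ _ _ h
    exact ⟨p ▸ Set.zero_mem_center, q ▸ Set.zero_mem_center,
      r ▸ Set.zero_mem_center, s ▸ Set.zero_mem_center⟩
  tfae_have 3 → 2
  | h3 => by
    have idem : ∀ e : R, e * e = e → ∀ r : R, e * r = r * e := by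
      intro e he r
      have h1e : e * (1 - e) = 0 := by rw [mul_sub, mul_one, he, sub_self]
      have h1e' : (1 - e) * e = 0 := by rw [sub_mul, one_mul, he, sub_self]
      have hee : (1 - e) * (1 - e) = 1 - e := by rw [mul_sub, mul_one, h1e', sub_zero]
      have key1 : e * r * (1 - e) = 0 := by
        set u := e * r * (1 - e) with hu
        have heu : e * u = u := by rw [hu, ← mul_assoc, ← mul_assoc, he]
        have hu1e : u * (1 - e) = u := by rw [hu, mul_assoc (e * r), hee]
        have huu : u * u = 0 := by
          have h' : u * u = e * r * ((1 - e) * e) * (r * (1 - e)) := by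
            rw [hu]; noncomm_ring
          rw [h', h1e', mul_zero, zero_mul]
        have hprod : (C e + C u * X) * (C (1 - e) + C (-u) * X) = 0 := by
          rw [lin_mul, h1e]
          rw [show e * -u + u * (1 - e) = 0 by rw [mul_neg, heu, hu1e, neg_add_cancel]]
          rw [show u * -u = 0 by rw [mul_neg, huu, neg_zero]]
          simp
        obtain ⟨-, hc, -, -⟩ := h3 _ _ _ _ hprod
        rw [show e * -u = -u by rw [mul_neg, heu]] at hc
        have hcen : u ∈ Set.center R := by simpa using Set.neg_mem_center hc
        have hue : u * e = 0 := by
          rw [hu, mul_assoc (e * r), h1e', mul_zero]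
        calc u = e * u := heu.symm
          _ = u * e := (hcen.comm e).symm
          _ = 0 := hue
      have key2 : (1 - e) * r * e = 0 := by
        set v := (1 - e) * r * e with hv
        have h1v : (1 - e) * v = v := by rw [hv, ← mul_assoc, ← mul_assoc, hee]
        have hve : v * e = v := by rw [hv, mul_assoc ((1 - e) * r), he]
        have hvv : v * v = 0 := by
          have h' : v * v = (1 - e) * r * (e * (1 - e)) * (r * e) := by
            rw [hv]; noncomm_ring
          rw [h', h1e, mul_zero, zero_mul]
        have hprod : (C (1 - e) + C v * X) * (C e + C (-v) * X) = 0 := by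
          rw [lin_mul, h1e']
          rw [show (1 - e) * -v + v * e = 0 by rw [mul_neg, h1v, hve, neg_add_cancel]]
          rw [show v * -v = 0 by rw [mul_neg, hvv, neg_zero]]
          simp
        obtain ⟨-, hc, -, -⟩ := h3 _ _ _ _ hprod
        rw [show (1 - e) * -v = -v by rw [mul_neg, h1v]] at hc
        have hcen : v ∈ Set.center R := by simpa using Set.neg_mem_center hc
        have hev : e * v = 0 := by
          rw [hv, ← mul_assoc, ← mul_assoc, h1e, zero_mul, zero_mul]
        calc v = v * e := hve.symm
          _ = e * v := hcen.comm e
          _ = 0 := hev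
      have hre : e * r = e * r * e := by
        have := key1
        rw [mul_sub, mul_one, sub_eq_zero] at this
        exact this
      have her : r * e = e * r * e := by
        have h' := key2
        rw [sub_mul, one_mul, sub_mul, sub_eq_zero] at h'
        exact h'
      exact hre.trans her.symm
    apply sq_red
    intro a ha
    obtain ⟨x, hx⟩ := hvnr a
    have he : (a * x) * (a * x) = a * x := by
      have h' : (a * x) * (a * x) = (a * x * a) * x := by noncomm_ring
      rw [h', ← hx]
    calc a = a * x * a := hx
      _ = a * (a * x) := idem (a * x) he a
      _ = a * a * x := by rw [← mul_assoc]
      _ = 0 := by rw [ha, zero_mul]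
  tfae_have 2 → 1
  | h2 => red_armendariz h2
  tfae_have 2 → 5
  | h2 => fun a b hab r => red_semicomm h2 a b hab r
  tfae_have 5 → 2
  | h5 => by
    apply sq_red
    intro a ha
    obtain ⟨x, hx⟩ := hvnr a
    exact hx.trans (h5 a a ha x)
  tfae_finish
end

section
/- If R is a von Neumann regular ring that is central linear Armendariz, then R is reduced. -/
open Polynomial

lemma lin_mul_expand {R : Type*} [Ring R] (a b c d : R) :
    (C a + C b * X) * (C c + C d * X)
      = C (a*c) + C (a*d + b*c) * X + C (b*d) * X^2 := by
  simp only [add_mul, mul_add, mul_assoc, X_mul_C, ← C_mul, C_add, sq]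
  rw [show X * (C d * X) = C d * (X*X) from by rw [← mul_assoc, X_mul_C, mul_assoc]]
  simp only [← mul_assoc, ← C_mul]
  abel

lemma idem_corner {R : Type*} [Ring R] (h : CentralLinearArmendariz R)
    (e : R) (he : e * e = e) (r : R) : e * r * (1 - e) = 0 := by
  obtain ⟨z, hz⟩ : ∃ z, z = e * r * (1 - e) := ⟨_, rfl⟩
  rw [← hz]
  have hez : e * z = z := by rw [hz, ← mul_assoc, ← mul_assoc, he]
  have hze : z * e = 0 := by
    rw [hz, mul_assoc, sub_mul, one_mul, he, sub_self, mul_zero]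
  have hzz : z * z = 0 := by
    rw [show z * z = z * e * z from by rw [mul_assoc, hez], hze, zero_mul]
  have hpoly : (C e + C z * X) * (C (1 - e) + C (-z) * X) = 0 := by
    rw [lin_mul_expand]
    have h1 : e * (1 - e) = 0 := by rw [mul_sub, mul_one, he, sub_self]
    have h2 : e * (-z) + z * (1 - e) = 0 := by
      rw [mul_neg, hez, mul_sub, mul_one, hze, sub_zero, neg_add_cancel]
    have h3 : z * (-z) = 0 := by rw [mul_neg, hzz, neg_zero]
    rw [h1, h2, h3]; simp
  obtain ⟨-, -, hc, -⟩ := h e z (1 - e) (-z) hpoly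
  have hz1 : z * (1 - e) = z := by rw [mul_sub, mul_one, hze, sub_zero]
  rw [hz1] at hc
  rw [Set.mem_center_iff] at hc
  have := (hc.comm e).eq
  rw [hze, hez] at this
  exact this.symm

lemma idem_central {R : Type*} [Ring R] (h : CentralLinearArmendariz R)
    (e : R) (he : e * e = e) (r : R) : e * r = r * e := by
  have h1 : e * r * (1 - e) = 0 := idem_corner h e he r
  have he' : (1 - e) * (1 - e) = 1 - e := by
    rw [sub_mul, one_mul, mul_sub, mul_one, he, sub_self, sub_zero]
  have h2 : (1 - e) * r * (1 - (1 - e)) = 0 := idem_corner h (1 - e) he' r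
  have h1' : e * r = e * r * e := by
    have : e * r * (1 - e) = e * r - e * r * e := by rw [mul_sub, mul_one]
    rw [this] at h1; exact sub_eq_zero.mp h1
  have h2' : r * e = e * r * e := by
    rw [sub_sub_cancel] at h2
    have : (1 - e) * r * e = r * e - e * r * e := by rw [sub_mul, one_mul, sub_mul]
    rw [this] at h2; exact sub_eq_zero.mp h2
  rw [h1', h2']

lemma sq_zero {R : Type*} [Ring R] (hvnr : ∀ a : R, ∃ x : R, a = a * x * a)
    (h : CentralLinearArmendariz R) (a : R) (ha : a * a = 0) : a = 0 := by
  obtain ⟨x, hx⟩ := hvnr a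
  have he : (x * a) * (x * a) = x * a := by
    calc (x * a) * (x * a) = x * (a * x * a) := by noncomm_ring
    _ = x * a := by rw [← hx]
  have hc := idem_central h (x * a) he a
  calc a = a * (x * a) := by rw [← mul_assoc, ← hx]
  _ = (x * a) * a := hc.symm
  _ = x * (a * a) := by rw [mul_assoc]
  _ = 0 := by rw [ha, mul_zero]

/-- A von Neumann regular, central linear Armendariz ring is reduced. -/
theorem stmt_4 (R : Type*) [Ring R] (hvnr : ∀ a : R, ∃ x : R, a = a * x * a)
    (h : CentralLinearArmendariz R) : IsReduced R := by
  constructor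
  rintro a ⟨n, hn⟩
  induction n using Nat.strong_induction_on generalizing a with
  | _ n ih =>
    match n with
    | 0 =>
      simp only [pow_zero] at hn
      calc a = a * 1 := (mul_one a).symm
      _ = 0 := by rw [hn, mul_zero]
    | 1 => simpa using hn
    | (m + 2) =>
      have hm : a ^ (m + 1) = 0 := by
        apply sq_zero hvnr h
        rw [← pow_add]
        have : a ^ (m + 2) ∣ a ^ (m + 1 + (m + 1)) := pow_dvd_pow a (by omega)
        obtain ⟨c, hc⟩ := this
        rw [hc, hn, zero_mul]
      exact ih (m + 1) (by omega) a hm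
end

section
/- Let R be a ring and e a central idempotent of R. Then R is central linear Armendariz if and only if both eR and (1−e)R (which are rings with identities e and 1−e respectively) are central linear Armendariz. -/
open Polynomial

/-- For `e : R`, the set `eR = {x : R | e * x = x}` as a non-unital subring of `R`
(when `e` is a central idempotent this set is exactly `eR`). -/
def cornerSubring {R : Type*} [Ring R] (e : R) : NonUnitalSubring R where
  carrier := {x | e * x = x}
  zero_mem' := mul_zero e
  add_mem' := fun {a b} ha hb => by simp only [Set.mem_setOf_eq] at *; rw [mul_add, ha, hb]
  neg_mem' := fun {a} ha => by simp only [Set.mem_setOf_eq] at *; rw [mul_neg, ha]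
  mul_mem' := fun {a b} ha hb => by
    simp only [Set.mem_setOf_eq] at *; rw [← mul_assoc, ha]

/-- For a central idempotent `e`, the set `eR` is a ring with identity `e`. -/
def cornerRing {R : Type*} [Ring R] (e : R) (he : IsIdempotentElem e)
    (hc : e ∈ Set.center R) : Ring (cornerSubring e) where
  __ := (inferInstance : NonUnitalRing (cornerSubring e))
  one := ⟨e, he⟩
  one_mul x := Subtype.ext x.2
  mul_one x := Subtype.ext (by
    have hx : e * (x : R) = x := x.2
    have : (x : R) * e = e * (x : R) := (Set.mem_center_iff.mp hc).comm x |>.symm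
    show (x : R) * e = x
    rw [this, hx])

lemma linmul_iff {R : Type*} [Ring R] (a₀ a₁ b₀ b₁ : R) :
    (C a₀ + C a₁ * X) * (C b₀ + C b₁ * X) = 0 ↔
      (a₀*b₀ = 0 ∧ a₀*b₁ + a₁*b₀ = 0 ∧ a₁*b₁ = 0) := by
  have h : (C a₀ + C a₁ * X) * (C b₀ + C b₁ * X)
      = C (a₀*b₀) + C (a₀*b₁+a₁*b₀) * X + C (a₁*b₁) * X^2 := by
    have e1 : C a₁ * X * C b₀ = C a₁ * C b₀ * X := by
      rw [mul_assoc, X_mul_C, ← mul_assoc]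
    have e2 : C a₁ * X * C b₁ * X = C (a₁*b₁) * X^2 := by
      rw [mul_assoc (C a₁) X (C b₁), X_mul_C, ← mul_assoc, ← C_mul, mul_assoc, ← sq]
    simp only [add_mul, mul_add, ← mul_assoc, e1, e2, ← C_mul, C_add, add_mul]
    abel
  rw [h]
  constructor
  · intro h0
    refine ⟨?_, ?_, ?_⟩
    · have := congrArg (fun p => coeff p 0) h0
      simpa [mul_assoc, coeff_C_mul, coeff_X_pow] using this
    · have := congrArg (fun p => coeff p 1) h0
      simpa [mul_assoc, coeff_C_mul, coeff_X_pow] using this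
    · have := congrArg (fun p => coeff p 2) h0
      simpa [mul_assoc, coeff_C_mul, coeff_X_pow] using this
  · rintro ⟨h1,h2,h3⟩; simp [h1,h2,h3]

lemma CLA_iff (S : Type*) [Ring S] :
    CentralLinearArmendariz S ↔
      ∀ a₀ a₁ b₀ b₁ : S, a₀*b₀ = 0 → a₀*b₁ + a₁*b₀ = 0 → a₁*b₁ = 0 →
        (∀ g : S, g*(a₀*b₀) = (a₀*b₀)*g) ∧ (∀ g : S, g*(a₀*b₁) = (a₀*b₁)*g) ∧
        (∀ g : S, g*(a₁*b₀) = (a₁*b₀)*g) ∧ (∀ g : S, g*(a₁*b₁) = (a₁*b₁)*g) := by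
  constructor
  · intro h a₀ a₁ b₀ b₁ h1 h2 h3
    simpa only [Semigroup.mem_center_iff] using
      h a₀ a₁ b₀ b₁ ((linmul_iff a₀ a₁ b₀ b₁).mpr ⟨h1, h2, h3⟩)
  · intro h a₀ a₁ b₀ b₁ hp
    obtain ⟨h1, h2, h3⟩ := (linmul_iff a₀ a₁ b₀ b₁).mp hp
    simpa only [Semigroup.mem_center_iff] using h a₀ a₁ b₀ b₁ h1 h2 h3

lemma corner_of_CLA {R : Type*} [Ring R] {u : R} (hu : IsIdempotentElem u)
    (huc : u ∈ Set.center R) (h : CentralLinearArmendariz R) :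
    @CentralLinearArmendariz (cornerSubring u) (cornerRing u hu huc) := by
  rw [CLA_iff] at h ⊢
  intro a₀ a₁ b₀ b₁ h1 h2 h3
  have c1 : (a₀ : R) * b₀ = 0 := congrArg Subtype.val h1
  have c2 : (a₀ : R) * b₁ + (a₁ : R) * b₀ = 0 := congrArg Subtype.val h2
  have c3 : (a₁ : R) * b₁ = 0 := congrArg Subtype.val h3
  obtain ⟨z1, z2, z3, z4⟩ := h (a₀ : R) a₁ b₀ b₁ c1 c2 c3
  exact ⟨fun g => Subtype.ext (z1 g), fun g => Subtype.ext (z2 g),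
    fun g => Subtype.ext (z3 g), fun g => Subtype.ext (z4 g)⟩

lemma corner_center_of {R : Type*} [Ring R] {u : R} (hu : IsIdempotentElem u)
    (huc : u ∈ Set.center R)
    (H : @CentralLinearArmendariz (cornerSubring u) (cornerRing u hu huc))
    {a₀ a₁ b₀ b₁ : R} (p1 : a₀*b₀ = 0) (p2 : a₀*b₁ + a₁*b₀ = 0) (p3 : a₁*b₁ = 0) :
    (∀ r : R, u*(r*(a₀*b₀)) = u*((a₀*b₀)*r)) ∧
    (∀ r : R, u*(r*(a₀*b₁)) = u*((a₀*b₁)*r)) ∧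
    (∀ r : R, u*(r*(a₁*b₀)) = u*((a₁*b₀)*r)) ∧
    (∀ r : R, u*(r*(a₁*b₁)) = u*((a₁*b₁)*r)) := by
  rw [CLA_iff] at H
  have hcom : ∀ r : R, u*r = r*u := fun r => ((Semigroup.mem_center_iff.mp huc) r).symm
  have mem : ∀ x : R, u*(u*x) = u*x := fun x => by rw [← mul_assoc, hu.eq]
  have key : ∀ x y : R, (u*x)*(u*y) = u*(x*y) := by
    intro x y
    rw [mul_assoc u x (u*y), ← mul_assoc x u y, ← hcom x, mul_assoc u x y,
      ← mul_assoc u u, hu.eq]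
  obtain ⟨q1, q2, q3, q4⟩ := H ⟨u*a₀, mem a₀⟩ ⟨u*a₁, mem a₁⟩ ⟨u*b₀, mem b₀⟩ ⟨u*b₁, mem b₁⟩
    (Subtype.ext (show (u*a₀)*(u*b₀) = 0 by rw [key, p1, mul_zero]))
    (Subtype.ext (show (u*a₀)*(u*b₁) + (u*a₁)*(u*b₀) = 0 by
      rw [key, key, ← mul_add, p2, mul_zero]))
    (Subtype.ext (show (u*a₁)*(u*b₁) = 0 by rw [key, p3, mul_zero]))
  refine ⟨fun r => ?_, fun r => ?_, fun r => ?_, fun r => ?_⟩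
  · have t : (u*r)*((u*a₀)*(u*b₀)) = ((u*a₀)*(u*b₀))*(u*r) :=
      congrArg Subtype.val (q1 ⟨u*r, mem r⟩)
    rwa [key a₀ b₀, key r (a₀*b₀), key (a₀*b₀) r] at t
  · have t : (u*r)*((u*a₀)*(u*b₁)) = ((u*a₀)*(u*b₁))*(u*r) :=
      congrArg Subtype.val (q2 ⟨u*r, mem r⟩)
    rwa [key a₀ b₁, key r (a₀*b₁), key (a₀*b₁) r] at t
  · have t : (u*r)*((u*a₁)*(u*b₀)) = ((u*a₁)*(u*b₀))*(u*r) :=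
      congrArg Subtype.val (q3 ⟨u*r, mem r⟩)
    rwa [key a₁ b₀, key r (a₁*b₀), key (a₁*b₀) r] at t
  · have t : (u*r)*((u*a₁)*(u*b₁)) = ((u*a₁)*(u*b₁))*(u*r) :=
      congrArg Subtype.val (q4 ⟨u*r, mem r⟩)
    rwa [key a₁ b₁, key r (a₁*b₁), key (a₁*b₁) r] at t


/-- A central idempotent `e` of `R`: `R` is central linear Armendariz iff both
`eR` and `(1-e)R` are central linear Armendariz. -/
theorem stmt_6 (R : Type*) [Ring R] (e : R) (he : IsIdempotentElem e)
    (hc : e ∈ Set.center R) :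
    CentralLinearArmendariz R ↔
      (@CentralLinearArmendariz (cornerSubring e) (cornerRing e he hc) ∧
       @CentralLinearArmendariz (cornerSubring (1 - e))
         (cornerRing (1 - e) he.one_sub
           (Semigroup.mem_center_iff.mpr (fun g => by
             have := Semigroup.mem_center_iff.mp hc g
             rw [mul_sub, sub_mul, mul_one, one_mul, this])))) := by
  have hfc : (1 - e) ∈ Set.center R := Semigroup.mem_center_iff.mpr (fun g => by
    have := Semigroup.mem_center_iff.mp hc g
    rw [mul_sub, sub_mul, mul_one, one_mul, this])
  constructor
  · intro h
    exact ⟨corner_of_CLA he hc h, corner_of_CLA he.one_sub hfc h⟩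
  · rintro ⟨h1, h2⟩
    rw [CLA_iff]
    intro a₀ a₁ b₀ b₁ p1 p2 p3
    obtain ⟨e1, e2, e3, e4⟩ := corner_center_of he hc h1 p1 p2 p3
    obtain ⟨f1, f2, f3, f4⟩ := corner_center_of he.one_sub hfc h2 p1 p2 p3
    have split : ∀ x : R, e*x + (1-e)*x = x := fun x => by
      rw [← add_mul, add_sub_cancel, one_mul]
    refine ⟨fun r => ?_, fun r => ?_, fun r => ?_, fun r => ?_⟩
    · rw [← split (r*(a₀*b₀)), e1 r, f1 r, split]
    · rw [← split (r*(a₀*b₁)), e2 r, f2 r, split]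
    · rw [← split (r*(a₁*b₀)), e3 r, f3 r, split]
    · rw [← split (r*(a₁*b₁)), e4 r, f4 r, split]
end

section
/- Let n ≥ 2 be a natural number and let R = T(ℤ_{2ⁿ}, ℤ_{2ⁿ}) be the trivial extension of ℤ_{2ⁿ} by itself. Then R is central linear Armendariz but R is not linear Armendariz: with a = 2^{n−1}, the polynomial f(x) = (a, 0) + (a, 1)x in R[x] satisfies f(x)² = 0, yet (a,0)·(a,1) ≠ 0. -/
open Polynomial

theorem mem_center_of_comm {R : Type*} [CommRing R] (x : R) : x ∈ Set.center R := by
  rw [Set.mem_center_iff]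
  exact ⟨fun g => mul_comm x g, fun a b => (mul_assoc x a b).symm,
    fun a b => mul_assoc a b x⟩

open TrivSqZeroExt in
/-- For `n ≥ 2`, the trivial extension `R = T(ℤ_{2ⁿ}, ℤ_{2ⁿ})` is central linear
Armendariz but not linear Armendariz: with `a = 2^(n-1)`, the linear polynomial
`f(x) = (a,0) + (a,1)x` satisfies `f(x)² = 0` while `(a,0)·(a,1) ≠ 0`. -/
theorem stmt_8 (n : ℕ) (hn : 2 ≤ n) :
    CentralLinearArmendariz (TrivSqZeroExt (ZMod (2 ^ n)) (ZMod (2 ^ n))) ∧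
    ¬ LinearArmendariz (TrivSqZeroExt (ZMod (2 ^ n)) (ZMod (2 ^ n))) ∧
    (letI a : ZMod (2 ^ n) := (2 : ZMod (2 ^ n)) ^ (n - 1)
     (C (inl a : TrivSqZeroExt (ZMod (2 ^ n)) (ZMod (2 ^ n))) +
        C (inl a + inr 1) * X) ^ 2 = 0 ∧
     (inl a : TrivSqZeroExt (ZMod (2 ^ n)) (ZMod (2 ^ n))) * (inl a + inr 1) ≠ 0) := by
  set a : ZMod (2 ^ n) := (2 : ZMod (2 ^ n)) ^ (n - 1) with ha
  set R := TrivSqZeroExt (ZMod (2 ^ n)) (ZMod (2 ^ n)) with hR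
  have h2n : (2 : ZMod (2 ^ n)) ^ n = 0 := by exact_mod_cast ZMod.natCast_self (2 ^ n)
  have h2a : 2 * a = 0 := by
    have : (2 : ZMod (2 ^ n)) * 2 ^ (n - 1) = 2 ^ n := by
      rw [← pow_succ']; congr 1; omega
    rw [ha, this, h2n]
  have haa : a * a = 0 := by
    have : a * a = 2 ^ n * 2 ^ (n - 2) := by
      rw [ha, ← pow_add, ← pow_add]; congr 1; omega
    rw [this, h2n, zero_mul]
  have haa' : a + a = 0 := by rw [← two_mul]; exact h2a
  have hane : a ≠ 0 := by
    rw [ha]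
    have : ((2 ^ (n - 1) : ℕ) : ZMod (2 ^ n)) ≠ 0 := by
      rw [Ne, ZMod.natCast_eq_zero_iff]
      intro h
      have := Nat.le_of_dvd (by positivity) h
      have h1 : 2 ^ (n - 1) < 2 ^ n := Nat.pow_lt_pow_right one_lt_two (by omega)
      omega
    simpa using this
  have key1 : (inl a : R) * inl a = 0 := by rw [← inl_mul, haa, inl_zero]
  have key2 : (inl a : R) * (inl a + inr 1) = inr a := by
    ext <;> simp [haa]
  have key2' : ((inl a : R) + inr 1) * inl a = inr a := by
    ext <;> simp [haa]
  have key3 : ((inl a : R) + inr 1) * (inl a + inr 1) = 0 := by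
    ext <;> simp [haa, haa']
  have hsq : ((C (inl a : R) + C (inl a + inr 1) * X)) ^ 2 = 0 := by
    have expand : ((C (inl a : R) + C (inl a + inr 1) * X)) ^ 2 =
        C ((inl a : R) * inl a) + C ((inl a : R) * (inl a + inr 1) +
          ((inl a : R) + inr 1) * inl a) * X +
          C (((inl a : R) + inr 1) * (inl a + inr 1)) * X ^ 2 := by
      simp only [C_mul, C_add]; ring
    rw [expand, key1, key2, key2', key3, ← inr_add, haa', inr_zero]
    simp
  have hprod_ne : (inl a : R) * (inl a + inr 1) ≠ 0 := by
    rw [key2]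
    intro h
    exact hane (by simpa using congrArg TrivSqZeroExt.snd h)
  refine ⟨?_, ?_, hsq, hprod_ne⟩
  · intro a₀ a₁ b₀ b₁ _
    exact ⟨mem_center_of_comm _, mem_center_of_comm _, mem_center_of_comm _,
      mem_center_of_comm _⟩
  · intro hLA
    have := hLA (inl a) (inl a + inr 1) (inl a) (inl a + inr 1) (by rw [← sq]; exact hsq)
    exact hprod_ne this.2.1
end

section
/- Let R be a ring. If there exist elements a, b ∈ R such that a² = 0, b² = 0, ab = ba, and ab is not central in R, then R is not a central linear Armendariz ring. -/
open Polynomial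

/-- If `a, b ∈ R` satisfy `a² = 0`, `b² = 0`, `ab = ba` and `ab` is not central,
then `R` is not central linear Armendariz. -/
theorem stmt_9 (R : Type*) [Ring R] (a b : R) (ha : a ^ 2 = 0) (hb : b ^ 2 = 0)
    (hab : a * b = b * a) (hnc : a * b ∉ Set.center R) :
    ¬ CentralLinearArmendariz R := by
  intro h
  have haa : a * a = 0 := by simpa [sq] using ha
  have hbb : b * b = 0 := by simpa [sq] using hb
  have hx1 : ∀ c d : R, (C c * X) * C d = C (c * d) * X := by
    intro c d
    rw [mul_assoc, X_mul_C, ← mul_assoc, ← C_mul]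
  have hx2 : ∀ c d : R, (C c * X) * (C d * X) = C (c * d) * (X * X) := by
    intro c d
    rw [mul_assoc, ← mul_assoc X (C d) X, X_mul_C, ← mul_assoc, ← mul_assoc, ← C_mul, mul_assoc]
  have key : (C a + C (-b) * X) * (C a + C b * X) = 0 := by
    rw [add_mul, mul_add, mul_add, hx1, hx2, ← C_mul, neg_mul, neg_mul, haa, hbb]
    rw [← mul_assoc (C a) (C b) X, ← C_mul, hab]
    simp
  exact hnc (h a (-b) a b key).2.1
end

section
/- Let I be an ideal of a ring R such that I is reduced (i.e., I contains no nonzero nilpotent elements) and the quotient ring R/I is central linear Armendariz. Then R is central linear Armendariz. -/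
open Polynomial

/-- If `I` is a reduced (two-sided) ideal of `R` (no nonzero square-zero elements)
and `R/I` is central linear Armendariz, then `R` is central linear Armendariz. -/
theorem stmt_12 (R : Type*) [Ring R] (I : TwoSidedIdeal R)
    (hred : ∀ a ∈ I, a * a = 0 → a = 0)
    (hq : CentralLinearArmendariz I.ringCon.Quotient) :
    CentralLinearArmendariz R := by
  intro a₀ a₁ b₀ b₁ h
  -- coefficient relations in R
  have h00 : a₀ * b₀ = 0 := by
    have := congrArg (fun p => p.coeff 0) h
    simpa [coeff_mul, Finset.Nat.sum_antidiagonal_eq_sum_range_succ_mk,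
      Finset.sum_range_succ, coeff_X] using this
  have h1 : a₀ * b₁ + a₁ * b₀ = 0 := by
    have := congrArg (fun p => p.coeff 1) h
    simpa [coeff_mul, Finset.Nat.sum_antidiagonal_eq_sum_range_succ_mk,
      Finset.sum_range_succ, coeff_X] using this
  have h11 : a₁ * b₁ = 0 := by
    have := congrArg (fun p => p.coeff 2) h
    simpa [coeff_mul, Finset.Nat.sum_antidiagonal_eq_sum_range_succ_mk,
      Finset.sum_range_succ, coeff_X] using this
  have h1' : a₀ * b₁ = -(a₁ * b₀) := by linear_combination (norm := noncomm_ring) h1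
  -- the quotient map
  set φ : R →+* I.ringCon.Quotient := I.ringCon.mk' with hφ
  have hbar : (C (φ a₀) + C (φ a₁) * X) * (C (φ b₀) + C (φ b₁) * X) = 0 := by
    have := congrArg (Polynomial.map φ) h
    simpa using this
  obtain ⟨-, -, hc, -⟩ := hq (φ a₀) (φ a₁) (φ b₀) (φ b₁) hbar
  -- key lemma: b₀ * x * a₀ = 0 for x ∈ I
  have L0 : ∀ x ∈ I, b₀ * x * a₀ = 0 := by
    intro x hx
    have hmem : b₀ * x * a₀ ∈ I := I.mul_mem_right _ _ (I.mul_mem_left _ _ hx)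
    refine hred _ hmem ?_
    have : b₀ * x * a₀ * (b₀ * x * a₀) = b₀ * x * (a₀ * b₀) * (x * a₀) := by
      noncomm_ring
    rw [this, h00, mul_zero, zero_mul]
  -- the commutator is central
  have hcen : ∀ r : R, a₁ * b₀ * r = r * (a₁ * b₀) := by
    intro r
    have hcI : a₁ * b₀ * r - r * (a₁ * b₀) ∈ I := by
      rw [← I.rel_iff, ← RingCon.eq]
      have hz := Semigroup.mem_center_iff.mp hc (φ r)
      show φ (a₁ * b₀ * r) = φ (r * (a₁ * b₀))
      rw [map_mul, map_mul, map_mul, map_mul, ← hz]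
    set c : R := a₁ * b₀ * r - r * (a₁ * b₀) with hc'
    have key : ∀ x ∈ I, c * x * c = 0 := by
      intro x hx
      have z1 := L0 (r * x * r) (I.mul_mem_right _ _ (I.mul_mem_left _ _ hx))
      have z2 := L0 (r * x) (I.mul_mem_left _ _ hx)
      have z3 := L0 (x * r) (I.mul_mem_right _ _ hx)
      have z4 := L0 x hx
      have e : c * x * c = c * x * (r * (a₀ * b₁) - a₀ * b₁ * r) := by
        rw [hc', h1']; noncomm_ring
      have e2 : c * x * (r * (a₀ * b₁) - a₀ * b₁ * r)
          = a₁ * (b₀ * (r * x * r) * a₀) * b₁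
          - a₁ * (b₀ * (r * x) * a₀) * (b₁ * r)
          - (r * a₁) * (b₀ * (x * r) * a₀) * b₁
          + (r * a₁) * (b₀ * x * a₀) * (b₁ * r) := by
        rw [hc']; noncomm_ring
      rw [e, e2, z1, z2, z3, z4]
      simp
    have hc3 : c * c * c = 0 := key c hcI
    have hc2I : c * c ∈ I := I.mul_mem_right _ _ hcI
    have hc2 : c * c = 0 := by
      refine hred _ hc2I ?_
      calc c * c * (c * c) = c * c * c * c := by noncomm_ring
        _ = 0 := by rw [hc3, zero_mul]
    have : c = 0 := hred c hcI hc2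
    exact sub_eq_zero.mp this
  have hcen' : a₁ * b₀ ∈ Set.center R :=
    Semigroup.mem_center_iff.mpr fun g => (hcen g).symm
  exact ⟨by rw [h00]; exact Set.zero_mem_center, by rw [h1']; exact Set.neg_mem_center hcen',
    hcen', by rw [h11]; exact Set.zero_mem_center⟩
end

section
/- For any ring R, the polynomial ring R[x] is central linear Armendariz if and only if the Laurent polynomial ring R[x, x⁻¹] is central linear Armendariz. -/
open Polynomial

section Aux
open LaurentPolynomial (T T_add T_zero commute_T)
variable {R : Type*} [Ring R]

lemma T_cancel (k : ℤ) {u v : LaurentPolynomial R} (h : u * T k = v * T k) : u = v := by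
  have h2 := congrArg (· * T (-k)) h
  simp only [mul_assoc, ← T_add, add_neg_cancel, T_zero, mul_one] at h2
  exact h2

lemma center_of_mul_T {z : LaurentPolynomial R} (k : ℤ)
    (h : z * T k ∈ Set.center (LaurentPolynomial R)) :
    z ∈ Set.center (LaurentPolynomial R) := by
  rw [Semigroup.mem_center_iff] at h ⊢
  intro g
  apply T_cancel k
  calc g * z * T k = g * (z * T k) := by rw [mul_assoc]
    _ = z * T k * g := h g
    _ = z * (T k * g) := by rw [mul_assoc]
    _ = z * (g * T k) := by rw [(commute_T k g).eq]
    _ = z * g * T k := by rw [mul_assoc]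

lemma toLaurent_center {z : R[X]} (hz : z ∈ Set.center (Polynomial R)) :
    toLaurent z ∈ Set.center (LaurentPolynomial R) := by
  rw [Semigroup.mem_center_iff] at hz ⊢
  intro g
  obtain ⟨n, g', hg⟩ := g.exists_T_pow
  apply T_cancel (n : ℤ)
  calc g * toLaurent z * T n = g * (toLaurent z * T n) := by rw [mul_assoc]
    _ = g * (T n * toLaurent z) := by rw [(commute_T _ _).eq]
    _ = g * T n * toLaurent z := by rw [mul_assoc]
    _ = toLaurent g' * toLaurent z := by rw [hg]
    _ = toLaurent (g' * z) := by rw [map_mul]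
    _ = toLaurent (z * g') := by rw [hz g']
    _ = toLaurent z * toLaurent g' := by rw [map_mul]
    _ = toLaurent z * (g * T n) := by rw [hg]
    _ = toLaurent z * g * T n := by rw [mul_assoc]

lemma center_of_toLaurent {z : R[X]}
    (hz : toLaurent z ∈ Set.center (LaurentPolynomial R)) :
    z ∈ Set.center (Polynomial R) := by
  rw [Semigroup.mem_center_iff] at hz ⊢
  intro g
  apply Polynomial.toLaurent_injective (R := R)
  rw [map_mul, map_mul, hz (toLaurent g)]

lemma commute_C_center {S : Type*} [Ring S] {c : S} (hc : c ∈ Set.center S)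
    (f : S[X]) : Commute (Polynomial.C c) f := by
  rw [Semigroup.mem_center_iff] at hc
  induction f using Polynomial.induction_on' with
  | add p q hp hq => exact hp.add_right hq
  | monomial n a =>
    show _ = _
    rw [Polynomial.C_mul_monomial, Polynomial.monomial_mul_C, hc a]

lemma T_mem_center (n : ℤ) : (T n : LaurentPolynomial R) ∈ Set.center (LaurentPolynomial R) :=
  Semigroup.mem_center_iff.mpr fun g => ((commute_T n g).eq).symm

end Aux

section Main
open LaurentPolynomial (T T_add T_zero commute_T)
variable {R : Type*} [Ring R]

lemma mul_mul_T (a b : LaurentPolynomial R) (N M : ℤ) :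
    (a * T N) * (b * T M) = a * b * T (N + M) := by
  calc (a * T N) * (b * T M) = a * (T N * b) * T M := by noncomm_ring
    _ = a * (b * T N) * T M := by rw [(commute_T N b).eq]
    _ = a * b * (T N * T M) := by noncomm_ring
    _ = a * b * T (N + M) := by rw [← T_add]

lemma hfactor (u₀ u₁ : LaurentPolynomial R) (k : ℤ) :
    (C (u₀ * T k) + C (u₁ * T k) * X : (LaurentPolynomial R)[X])
      = (C u₀ + C u₁ * X) * C (T k) := by
  have hx := (commute_C_center (T_mem_center (R := R) k)
    (X : (LaurentPolynomial R)[X])).eq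
  calc (C (u₀ * T k) + C (u₁ * T k) * X : (LaurentPolynomial R)[X])
      = C u₀ * C (T k) + C u₁ * (C (T k) * X) := by rw [map_mul, map_mul, mul_assoc]
    _ = C u₀ * C (T k) + C u₁ * (X * C (T k)) := by rw [hx]
    _ = (C u₀ + C u₁ * X) * C (T k) := by noncomm_ring

lemma CLA_forward (h : CentralLinearArmendariz (Polynomial R)) :
    CentralLinearArmendariz (LaurentPolynomial R) := by
  intro a₀ a₁ b₀ b₁ heq
  obtain ⟨n₀, p₀, hp₀⟩ := a₀.exists_T_pow
  obtain ⟨n₁, p₁, hp₁⟩ := a₁.exists_T_pow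
  obtain ⟨m₀, q₀, hq₀⟩ := b₀.exists_T_pow
  obtain ⟨m₁, q₁, hq₁⟩ := b₁.exists_T_pow
  have hP₀ : toLaurent (p₀ * X ^ n₁) = a₀ * T ((n₀ : ℤ) + n₁) := by
    rw [map_mul, Polynomial.toLaurent_X_pow, hp₀, mul_assoc, ← T_add]
  have hP₁ : toLaurent (p₁ * X ^ n₀) = a₁ * T ((n₀ : ℤ) + n₁) := by
    rw [add_comm (n₀ : ℤ) (n₁ : ℤ), map_mul, Polynomial.toLaurent_X_pow, hp₁,
      mul_assoc, ← T_add]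
  have hQ₀ : toLaurent (q₀ * X ^ m₁) = b₀ * T ((m₀ : ℤ) + m₁) := by
    rw [map_mul, Polynomial.toLaurent_X_pow, hq₀, mul_assoc, ← T_add]
  have hQ₁ : toLaurent (q₁ * X ^ m₀) = b₁ * T ((m₀ : ℤ) + m₁) := by
    rw [add_comm (m₀ : ℤ) (m₁ : ℤ), map_mul, Polynomial.toLaurent_X_pow, hq₁,
      mul_assoc, ← T_add]
  set N : ℤ := (n₀ : ℤ) + n₁
  set M : ℤ := (m₀ : ℤ) + m₁
  have hmap : ∀ f₀ f₁ : R[X], Polynomial.map (toLaurent (R := R)) (C f₀ + C f₁ * X)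
      = C (toLaurent f₀) + C (toLaurent f₁) * X := by
    intro f₀ f₁
    simp [Polynomial.map_add, Polynomial.map_mul, Polynomial.map_C, Polynomial.map_X]
  have hzero : ((C (p₀ * X ^ n₁) + C (p₁ * X ^ n₀) * X) *
      (C (q₀ * X ^ m₁) + C (q₁ * X ^ m₀) * X) : (R[X])[X]) = 0 := by
    apply Polynomial.map_injective (toLaurent (R := R)) Polynomial.toLaurent_injective
    rw [Polynomial.map_mul, hmap, hmap, Polynomial.map_zero, hP₀, hP₁, hQ₀, hQ₁,
      hfactor, hfactor]
    have hcb := (commute_C_center (T_mem_center (R := R) N)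
      (C b₀ + C b₁ * X : (LaurentPolynomial R)[X])).eq
    calc ((C a₀ + C a₁ * X) * C (T N)) * ((C b₀ + C b₁ * X) * C (T M))
        = (C a₀ + C a₁ * X) * (C (T N) * (C b₀ + C b₁ * X)) * C (T M) := by noncomm_ring
      _ = (C a₀ + C a₁ * X) * ((C b₀ + C b₁ * X) * C (T N)) * C (T M) := by rw [hcb]
      _ = ((C a₀ + C a₁ * X) * (C b₀ + C b₁ * X)) * (C (T N) * C (T M)) := by noncomm_ring
      _ = 0 := by rw [heq, zero_mul]
  obtain ⟨h00, h01, h10, h11⟩ := h _ _ _ _ hzero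
  refine ⟨?_, ?_, ?_, ?_⟩
  · exact center_of_mul_T (N + M)
      (by rw [show a₀ * b₀ * T (N + M) = toLaurent ((p₀ * X ^ n₁) * (q₀ * X ^ m₁)) by
            rw [map_mul, hP₀, hQ₀, mul_mul_T]]
          exact toLaurent_center h00)
  · exact center_of_mul_T (N + M)
      (by rw [show a₀ * b₁ * T (N + M) = toLaurent ((p₀ * X ^ n₁) * (q₁ * X ^ m₀)) by
            rw [map_mul, hP₀, hQ₁, mul_mul_T]]
          exact toLaurent_center h01)
  · exact center_of_mul_T (N + M)
      (by rw [show a₁ * b₀ * T (N + M) = toLaurent ((p₁ * X ^ n₀) * (q₀ * X ^ m₁)) by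
            rw [map_mul, hP₁, hQ₀, mul_mul_T]]
          exact toLaurent_center h10)
  · exact center_of_mul_T (N + M)
      (by rw [show a₁ * b₁ * T (N + M) = toLaurent ((p₁ * X ^ n₀) * (q₁ * X ^ m₀)) by
            rw [map_mul, hP₁, hQ₁, mul_mul_T]]
          exact toLaurent_center h11)

lemma CLA_backward (h : CentralLinearArmendariz (LaurentPolynomial R)) :
    CentralLinearArmendariz (Polynomial R) := by
  intro a₀ a₁ b₀ b₁ heq
  have heq' : (C (toLaurent a₀) + C (toLaurent a₁) * X) *
      (C (toLaurent b₀) + C (toLaurent b₁) * X) = 0 := by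
    have h2 := congrArg (Polynomial.map (Polynomial.toLaurent (R := R))) heq
    simpa [Polynomial.map_mul, Polynomial.map_add, Polynomial.map_C,
      Polynomial.map_X] using h2
  obtain ⟨h00, h01, h10, h11⟩ := h _ _ _ _ heq'
  exact ⟨center_of_toLaurent (by rw [map_mul]; exact h00),
    center_of_toLaurent (by rw [map_mul]; exact h01),
    center_of_toLaurent (by rw [map_mul]; exact h10),
    center_of_toLaurent (by rw [map_mul]; exact h11)⟩

end Main

/-- For any ring `R`, the polynomial ring `R[x]` is central linear Armendariz iff
the Laurent polynomial ring `R[x, x⁻¹]` is central linear Armendariz. -/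
theorem stmt_15 (R : Type*) [Ring R] :
    CentralLinearArmendariz (Polynomial R) ↔
      CentralLinearArmendariz (LaurentPolynomial R) := by
  exact ⟨fun h => CLA_forward h, fun h => CLA_backward h⟩
end

section
/- If R is a central reduced ring, then R is central linear Armendariz. -/
open Polynomial

/-- A central reduced ring (every nilpotent element is central) is central linear
Armendariz. -/
theorem stmt_16 (R : Type*) [Ring R]
    (h : ∀ a : R, IsNilpotent a → a ∈ Set.center R) :
    CentralLinearArmendariz R := by
  intro a₀ a₁ b₀ b₁ heq
  have h0 : a₀ * b₀ = 0 := by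
    have := congrArg (fun p => Polynomial.coeff p 0) heq
    simpa [mul_add, add_mul, mul_assoc, coeff_C_mul] using this
  have h2 : a₁ * b₁ = 0 := by
    have := congrArg (fun p => Polynomial.coeff p 2) heq
    simpa [mul_add, add_mul, mul_assoc, coeff_C_mul, coeff_X_pow, ← sq] using this
  have h1 : a₁ * b₀ + a₀ * b₁ = 0 := by
    have := congrArg (fun p => Polynomial.coeff p 1) heq
    simpa [mul_add, add_mul, mul_assoc, coeff_C_mul] using this
  -- b₁ * a₁ is nilpotent hence central
  have hc : b₁ * a₁ ∈ Set.center R := by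
    apply h
    exact ⟨2, by rw [sq, mul_assoc, ← mul_assoc a₁, h2, zero_mul, mul_zero]⟩
  have hcomm := Set.mem_center_iff.mp hc |>.1
  have heq1 : a₀ * b₁ = -(a₁ * b₀) := eq_neg_of_add_eq_zero_right h1
  have hsq : (a₁ * b₀) * (a₁ * b₀) = 0 := by
    have : (a₀ * b₁) * (a₁ * b₀) = 0 := by
      calc (a₀ * b₁) * (a₁ * b₀) = a₀ * (b₁ * a₁) * b₀ := by simp [mul_assoc]
        _ = (b₁ * a₁) * a₀ * b₀ := by rw [← hcomm a₀]
        _ = 0 := by rw [mul_assoc, h0, mul_zero]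
    rw [heq1, neg_mul] at this
    exact neg_eq_zero.mp this
  have hc2 : a₁ * b₀ ∈ Set.center R := h _ ⟨2, by rw [sq]; exact hsq⟩
  refine ⟨h0 ▸ Set.zero_mem_center, ?_, hc2, h2 ▸ Set.zero_mem_center⟩
  rw [heq1]
  exact Set.neg_mem_center hc2
end

section
/- If R is a central reduced ring, then the trivial extension T(R, R) is central linear Armendariz. Conversely, if R is semiprime and T(R, R) is central linear Armendariz, then R is central reduced. -/
open Polynomial

section Aux

variable {S : Type*} [Ring S]

private lemma st17_expand (a₀ a₁ b₀ b₁ : S) :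
    (C a₀ + C a₁ * X) * (C b₀ + C b₁ * X)
      = C (a₀*b₀) + C (a₀*b₁ + a₁*b₀) * X + C (a₁*b₁) * X^2 := by
  simp only [C_add, C_mul, add_mul]
  rw [show (C a₁ * X) * (C b₀ + C b₁ * X) = C a₁ * ((X * C b₀) + (X * C b₁) * X) by noncomm_ring,
    X_mul, X_mul]
  noncomm_ring

private lemma st17_coeffs {a₀ a₁ b₀ b₁ : S}
    (h : (C a₀ + C a₁ * X) * (C b₀ + C b₁ * X) = 0) :
    a₀*b₀ = 0 ∧ a₀*b₁ + a₁*b₀ = 0 ∧ a₁*b₁ = 0 := by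
  rw [st17_expand] at h
  refine ⟨?_, ?_, ?_⟩
  · have h' := congrArg (fun p => coeff p 0) h
    simp only [coeff_add, coeff_C_mul, coeff_C, coeff_X_pow, coeff_X_zero, coeff_zero,
      mul_zero, add_zero] at h'
    simpa using h'
  · have h' := congrArg (fun p => coeff p 1) h
    simp only [coeff_add, coeff_C_mul, coeff_C, coeff_X_pow, coeff_X_one, coeff_zero,
      mul_zero, mul_one, add_zero] at h'
    simpa using h'
  · have h' := congrArg (fun p => coeff p 2) h
    simp only [coeff_add, coeff_C_mul, coeff_C, coeff_X_pow, coeff_X, coeff_zero,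
      mul_zero, mul_one, add_zero] at h'
    simpa using h'

private lemma st17_mk {a₀ a₁ b₀ b₁ : S} (h0 : a₀*b₀ = 0) (h1 : a₀*b₁ + a₁*b₀ = 0)
    (h2 : a₁*b₁ = 0) : (C a₀ + C a₁ * X) * (C b₀ + C b₁ * X) = 0 := by
  rw [st17_expand, h0, h1, h2]; simp

private lemma st17_pow (x y : S) (n : ℕ) : (y*x)^(n+1) = y * (x*y)^n * x := by
  induction n with
  | zero => simp
  | succ n ih => rw [pow_succ, ih]; simp only [pow_succ, mul_assoc]

private lemma st17_nil_comm {x y : S} (h : IsNilpotent (x*y)) : IsNilpotent (y*x) := by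
  obtain ⟨n, hn⟩ := h
  exact ⟨n+1, by rw [st17_pow, hn, mul_zero, zero_mul]⟩

private lemma st17_nil_sq {x : S} (h : IsNilpotent (x*x)) : IsNilpotent x := by
  obtain ⟨n, hn⟩ := h
  exact ⟨2*n, by rw [pow_mul, sq, hn]⟩

end Aux

section Main

variable {R : Type*} [Ring R]

open TrivSqZeroExt

private def st17_tm (x y : R) : TrivSqZeroExt R R := inl x + inr y

private lemma st17_tm_fst (x y : R) : (st17_tm x y).fst = x := by simp [st17_tm]
private lemma st17_tm_snd (x y : R) : (st17_tm x y).snd = y := by simp [st17_tm]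

private lemma st17_snd_mul (x y : TrivSqZeroExt R R) :
    (x * y).snd = x.fst * y.snd + x.snd * y.fst := by
  rw [TrivSqZeroExt.snd_mul]; simp [smul_eq_mul]

private lemma st17_tm_mul (x y u v : R) :
    st17_tm x y * st17_tm u v = st17_tm (x*u) (x*v + y*u) := by
  apply TrivSqZeroExt.ext <;>
    simp [st17_snd_mul, TrivSqZeroExt.fst_mul, st17_tm_fst, st17_tm_snd]

private lemma st17_tm_add (x y u v : R) :
    st17_tm x y + st17_tm u v = st17_tm (x+u) (y+v) := by
  apply TrivSqZeroExt.ext <;> simp [st17_tm_fst, st17_tm_snd]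

private lemma st17_tm_zero : (st17_tm 0 0 : TrivSqZeroExt R R) = 0 := by
  simp [st17_tm]

/-- if both components are central, the element is central in the trivial extension -/
private lemma st17_center_tm {x : TrivSqZeroExt R R}
    (h1 : x.fst ∈ Set.center R) (h2 : x.snd ∈ Set.center R) :
    x ∈ Set.center (TrivSqZeroExt R R) := by
  rw [Semigroup.mem_center_iff] at h1 h2 ⊢
  intro g
  apply TrivSqZeroExt.ext
  · simp only [TrivSqZeroExt.fst_mul]; exact h1 g.fst
  · simp only [st17_snd_mul]
    rw [h2 g.fst, h1 g.snd]; exact add_comm _ _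

end Main

/-- If `R` is central reduced, then the trivial extension `T(R,R)` is central linear
Armendariz; conversely, if `R` is semiprime and `T(R,R)` is central linear Armendariz,
then `R` is central reduced. -/
theorem stmt_17 (R : Type*) [Ring R] :
    ((∀ a : R, IsNilpotent a → a ∈ Set.center R) →
      CentralLinearArmendariz (TrivSqZeroExt R R)) ∧
    ((∀ a : R, (∀ r : R, a * r * a = 0) → a = 0) →
      CentralLinearArmendariz (TrivSqZeroExt R R) →
      ∀ a : R, IsNilpotent a → a ∈ Set.center R) := by
  constructor
  · -- forward direction
    intro hc A₀ A₁ B₀ B₁ h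
    obtain ⟨h0, h1, h2⟩ := st17_coeffs h
    set a := A₀.fst; set a' := A₀.snd
    set c := A₁.fst; set c' := A₁.snd
    set d := B₀.fst; set d' := B₀.snd
    set b := B₁.fst; set b' := B₁.snd
    -- scalar relations
    have R1 : a * d = 0 := by
      have := congrArg TrivSqZeroExt.fst h0; simpa [TrivSqZeroExt.fst_mul] using this
    have R2 : a * d' + a' * d = 0 := by
      have := congrArg TrivSqZeroExt.snd h0; simpa [st17_snd_mul] using this
    have R3 : c * b = 0 := by
      have := congrArg TrivSqZeroExt.fst h2; simpa [TrivSqZeroExt.fst_mul] using this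
    have R4 : c * b' + c' * b = 0 := by
      have := congrArg TrivSqZeroExt.snd h2; simpa [st17_snd_mul] using this
    have R5 : a * b + c * d = 0 := by
      have := congrArg TrivSqZeroExt.fst h1
      simpa [TrivSqZeroExt.fst_mul, TrivSqZeroExt.fst_add] using this
    have R6 : (a * b' + a' * b) + (c * d' + c' * d) = 0 := by
      have := congrArg TrivSqZeroExt.snd h1
      simpa [st17_snd_mul, TrivSqZeroExt.snd_add] using this
    -- nilpotency toolkit
    have comm : ∀ {x : R}, IsNilpotent x → ∀ y : R, Commute x y := fun hx y =>
      ((Semigroup.mem_center_iff.mp (hc _ hx)) y).symm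
    have nmulr : ∀ {x : R}, IsNilpotent x → ∀ y : R, IsNilpotent (x * y) := fun hx y =>
      (comm hx y).isNilpotent_mul_right hx
    have nmull : ∀ {x : R}, IsNilpotent x → ∀ y : R, IsNilpotent (y * x) := fun hx y =>
      ((comm hx y).symm).isNilpotent_mul_left hx
    have nadd : ∀ {x y : R}, IsNilpotent x → IsNilpotent y → IsNilpotent (x + y) :=
      fun hx hy => (comm hx _).isNilpotent_add hx hy
    have nsub : ∀ {x y : R}, IsNilpotent x → IsNilpotent y → IsNilpotent (x - y) := by
      intro x y hx hy
      rw [sub_eq_add_neg]; exact nadd hx hy.neg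
    have nsand : ∀ {p : R}, IsNilpotent p → ∀ x y : R, IsNilpotent (x * p * y) :=
      fun hp x y => nmulr (nmull hp x) y
    -- step 1
    have Pda : IsNilpotent (d * a) :=
      st17_nil_comm (show IsNilpotent (a*d) by rw [R1]; exact IsNilpotent.zero)
    have Pbc : IsNilpotent (b * c) :=
      st17_nil_comm (show IsNilpotent (c*b) by rw [R3]; exact IsNilpotent.zero)
    -- step 2
    have hab : a * b = -(c * d) := eq_neg_of_add_eq_zero_left R5
    have Pab : IsNilpotent (a * b) := by
      apply st17_nil_sq
      have e : (a*b) * (a*b) = -(a * (b*c) * d) := by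
        nth_rewrite 2 [hab]; noncomm_ring
      rw [e]
      exact (nsand Pbc a d).neg
    have Pcd : IsNilpotent (c * d) := by
      rw [eq_neg_of_add_eq_zero_right R5]; exact Pab.neg
    have Pba : IsNilpotent (b * a) := st17_nil_comm Pab
    have Pdc : IsNilpotent (d * c) := st17_nil_comm Pcd
    -- step 3
    have Pa'd : IsNilpotent (a' * d) := by
      apply st17_nil_sq
      have h' : a' * d = -(a * d') := eq_neg_of_add_eq_zero_right R2
      have e : (a'*d) * (a'*d) = -(a' * (d*a) * d') := by
        nth_rewrite 2 [h']; noncomm_ring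
      rw [e]; exact (nsand Pda a' d').neg
    have Pad' : IsNilpotent (a * d') := by
      rw [eq_neg_of_add_eq_zero_left R2]; exact Pa'd.neg
    -- step 4
    have Pc'b : IsNilpotent (c' * b) := by
      apply st17_nil_sq
      have h' : c' * b = -(c * b') := eq_neg_of_add_eq_zero_right R4
      have e : (c'*b) * (c'*b) = -(c' * (b*c) * b') := by
        nth_rewrite 2 [h']; noncomm_ring
      rw [e]; exact (nsand Pbc c' b').neg
    have Pcb' : IsNilpotent (c * b') := by
      rw [eq_neg_of_add_eq_zero_left R4]; exact Pc'b.neg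
    have Pbc' : IsNilpotent (b * c') := st17_nil_comm Pc'b
    have Pb'c : IsNilpotent (b' * c) := st17_nil_comm Pcb'
    -- step 5
    have hmz : (a*b' + c*d') + (a'*b + c'*d) = 0 := by
      rw [show (a*b' + c*d') + (a'*b + c'*d) = (a * b' + a' * b) + (c * d' + c' * d) by abel]
      exact R6
    have Pm : IsNilpotent (a*b' + c*d') := by
      apply st17_nil_sq
      have hm : a*b' + c*d' = -(a'*b + c'*d) := eq_neg_of_add_eq_zero_left hmz
      have e : (a*b' + c*d') * (a*b' + c*d')
          = -(a' * (b*a) * b' + a' * (b*c) * d' + c' * (d*a) * b' + c' * (d*c) * d') := by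
        nth_rewrite 1 [hm]; noncomm_ring
      rw [e]
      exact (nadd (nadd (nadd (nsand Pba a' b') (nsand Pbc a' d'))
        (nsand Pda c' b')) (nsand Pdc c' d')).neg
    have Pz : IsNilpotent (a'*b + c'*d) := by
      rw [eq_neg_of_add_eq_zero_right hmz]; exact Pm.neg
    -- step 6
    have Pab' : IsNilpotent (a*b') := by
      apply st17_nil_sq
      have e : (a*b') * (a*b') = (a*b') * (a*b' + c*d') - a * (b'*c) * d' := by noncomm_ring
      rw [e]
      exact nsub (nmull Pm _) (nsand Pb'c a d')
    have Pcd' : IsNilpotent (c*d') := by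
      have e : c*d' = (a*b' + c*d') - a*b' := by noncomm_ring
      rw [e]; exact nsub Pm Pab'
    -- step 7
    have Pa'b : IsNilpotent (a'*b) := by
      apply st17_nil_sq
      have e : (a'*b) * (a'*b) = (a'*b) * (a'*b + c'*d) - a' * (b*c') * d := by noncomm_ring
      rw [e]
      exact nsub (nmull Pz _) (nsand Pbc' a' d)
    have Pc'd : IsNilpotent (c'*d) := by
      have e : c'*d = (a'*b + c'*d) - a'*b := by noncomm_ring
      rw [e]; exact nsub Pz Pa'b
    -- conclusions
    refine ⟨?_, ?_, ?_, ?_⟩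
    · rw [h0]; exact Set.zero_mem_center
    · apply st17_center_tm
      · rw [TrivSqZeroExt.fst_mul]; exact hc _ Pab
      · rw [st17_snd_mul]; exact hc _ (nadd Pab' Pa'b)
    · apply st17_center_tm
      · rw [TrivSqZeroExt.fst_mul]; exact hc _ Pcd
      · rw [st17_snd_mul]; exact hc _ (nadd Pcd' Pc'd)
    · rw [h2]; exact Set.zero_mem_center
  · -- converse direction
    intro hsp hCLA
    have hsq : ∀ a : R, a * a = 0 → a = 0 := by
      intro a ha
      apply hsp
      intro r
      have hprod := st17_mk (a₀ := st17_tm a a) (a₁ := st17_tm 0 (a*r))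
        (b₀ := st17_tm a (-a)) (b₁ := st17_tm 0 (-(r*a)))
        (by rw [st17_tm_mul]
            have e1 : a * -a + a * a = 0 := by rw [mul_neg, neg_add_cancel]
            rw [e1, ha, st17_tm_zero])
        (by rw [st17_tm_mul, st17_tm_mul, st17_tm_add]
            simp only [mul_zero, zero_mul, add_zero, zero_add, mul_neg, neg_zero]
            have e1 : -(a * (r * a)) + a * r * a = 0 := by
              rw [← mul_assoc]; exact neg_add_cancel _
            rw [e1, st17_tm_zero])
        (by rw [st17_tm_mul]
            simp only [mul_zero, zero_mul, add_zero, zero_add]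
            exact st17_tm_zero)
      obtain ⟨-, -, hcent, -⟩ := hCLA _ _ _ _ hprod
      have h1 : st17_tm 0 (a*r) * st17_tm a (-a) = st17_tm 0 (a*r*a) := by
        rw [st17_tm_mul]
        simp only [zero_mul, mul_neg, neg_zero, zero_add]
      rw [h1] at hcent
      have hcen : ∀ x : R, x * (a*r*a) = (a*r*a) * x := by
        intro x
        have h3 := (Semigroup.mem_center_iff.mp hcent) (st17_tm x 0)
        have h4 := congrArg TrivSqZeroExt.snd h3
        simpa [st17_snd_mul, st17_tm_fst, st17_tm_snd] using h4
      apply hsp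
      intro s
      have e1 : (a*r*a) * s * (a*r*a) = ((a*r*a) * (a*r*a)) * s := by
        rw [mul_assoc, hcen s, ← mul_assoc]
      rw [e1]
      have e2 : (a*r*a) * (a*r*a) = a*r*(a*a)*(r*a) := by noncomm_ring
      rw [e2, ha]
      simp
    -- nilpotents vanish
    rintro a ⟨n, hn⟩
    have key : ∀ n : ℕ, ∀ a : R, a ^ (n+1) = 0 → a = 0 := by
      intro n
      induction n using Nat.strong_induction_on with
      | _ n ih =>
        intro a ha
        match n, ih with
        | 0, _ => simpa using ha
        | (m+1), ih =>
          have h1 : a ^ (m+1) = 0 := by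
            apply hsq
            have e : a^(m+1) * a^(m+1) = a^(m+1+1) * a^m := by
              rw [← pow_add, ← pow_add]; ring_nf
            rw [e, ha, zero_mul]
          exact ih m (by omega) a h1
    have ha0 : a = 0 := by
      cases n with
      | zero =>
        have h1 : (1 : R) = 0 := by simpa using hn
        calc a = a * 1 := by rw [mul_one]
        _ = 0 := by rw [h1, mul_zero]
      | succ m => exact key m a hn
    rw [ha0]; exact Set.zero_mem_center
end

section
/- If R is a semiprime ring that is central reduced, then R is reduced. -/
/-- A semiprime, central reduced ring is reduced. -/
theorem stmt_18 (R : Type*) [Ring R]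
    (hsp : ∀ a : R, (∀ r : R, a * r * a = 0) → a = 0)
    (hcr : ∀ a : R, IsNilpotent a → a ∈ Set.center R) :
    IsReduced R := by
  have key : ∀ x : R, x ^ 2 = 0 → x = 0 := by
    intro x hx
    have hc := Set.mem_center_iff.mp (hcr x ⟨2, hx⟩)
    apply hsp
    intro r
    calc x * r * x = r * x * x := by rw [hc.comm r]
    _ = r * x ^ 2 := by rw [mul_assoc, sq]
    _ = 0 := by rw [hx, mul_zero]
  have pow2 : ∀ n : ℕ, ∀ x : R, x ^ 2 ^ n = 0 → x = 0 := by
    intro n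
    induction n with
    | zero => intro x hx; simpa using hx
    | succ k ih =>
      intro x hx
      apply ih
      apply key
      rw [← pow_mul, ← pow_succ]
      exact hx
  constructor
  rintro x ⟨n, hn⟩
  apply pow2 n
  calc x ^ 2 ^ n = x ^ n * x ^ (2 ^ n - n) := by
        rw [← pow_add, Nat.add_sub_cancel' (Nat.lt_two_pow_self (n := n)).le]
  _ = 0 := by rw [hn, zero_mul]
end

section
/- Let R be a semiprime ring and n ≥ 2 a natural number. Then R is central reduced if and only if the quotient ring R[x]/(xⁿ) is central linear Armendariz, where (xⁿ) is the ideal of R[x] generated by xⁿ. -/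
open Polynomial
open Finset

section AuxRed
variable {R : Type*} [Ring R]

theorem red_flip (hred : ∀ x : R, x * x = 0 → x = 0) {x y : R} (h : x * y = 0) : y * x = 0 :=
  hred _ (by rw [show y * x * (y * x) = y * (x * y) * x by noncomm_ring, h, mul_zero, zero_mul])

theorem peel2 (hred : ∀ x : R, x * x = 0 → x = 0) (u v p q : ℕ → R) (s : ℕ)
    (hsum : ∑ i ∈ range (s + 1), (u i * v (s - i) + p i * q (s - i)) = 0)
    (huv_low : ∀ i j, i + j < s → u i * v j = 0)
    (hpq_low : ∀ i j, i + j < s → p i * q j = 0)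
    (huq : ∀ i j, i + j ≤ s → u i * q j = 0)
    (hpv : ∀ i j, i + j ≤ s → p i * v j = 0) :
    ∀ t, t ≤ s → u t * v (s - t) = 0 ∧ p t * q (s - t) = 0 := by
  intro t
  induction t using Nat.strong_induction_on with
  | _ t ih =>
    intro hts
    have huvt : u t * v (s - t) = 0 := by
      have key : ∑ i ∈ range (s + 1), ((u i * v (s - i) + p i * q (s - i)) * u t) = 0 := by
        rw [← Finset.sum_mul, hsum, zero_mul]
      have hsingle : ∑ i ∈ range (s + 1), ((u i * v (s - i) + p i * q (s - i)) * u t)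
          = u t * v (s - t) * u t := by
        rw [Finset.sum_eq_single_of_mem t (Finset.mem_range.mpr (Nat.lt_succ_of_le hts))]
        · have hp0 : p t * q (s - t) * u t = 0 := by
            have := red_flip hred (huq t (s - t) (by omega))
            rw [mul_assoc, this, mul_zero]
          rw [add_mul, hp0, add_zero]
        · intro i hi hit
          have hi' : i < s + 1 := Finset.mem_range.mp hi
          rcases lt_or_gt_of_ne hit with hlt | hgt
          · rw [(ih i hlt (by omega)).1, (ih i hlt (by omega)).2, zero_add, zero_mul]
          · have h1 : u i * (v (s - i) * u t) = 0 := by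
              rw [red_flip hred (huv_low t (s - i) (by omega)), mul_zero]
            have h2 : p i * (q (s - i) * u t) = 0 := by
              rw [red_flip hred (huq t (s - i) (by omega)), mul_zero]
            rw [add_mul, mul_assoc, mul_assoc, h1, h2, add_zero]
      have h0 : u t * v (s - t) * u t = 0 := by rw [← hsingle]; exact key
      exact hred _ (by
        rw [show u t * v (s - t) * (u t * v (s - t)) = (u t * v (s - t) * u t) * v (s - t) by
          noncomm_ring, h0, zero_mul])
    refine ⟨huvt, ?_⟩
    have key : ∑ i ∈ range (s + 1), ((u i * v (s - i) + p i * q (s - i)) * p t) = 0 := by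
      rw [← Finset.sum_mul, hsum, zero_mul]
    have hsingle : ∑ i ∈ range (s + 1), ((u i * v (s - i) + p i * q (s - i)) * p t)
        = p t * q (s - t) * p t := by
      rw [Finset.sum_eq_single_of_mem t (Finset.mem_range.mpr (Nat.lt_succ_of_le hts))]
      · rw [add_mul, huvt, zero_mul, zero_add]
      · intro i hi hit
        have hi' : i < s + 1 := Finset.mem_range.mp hi
        rcases lt_or_gt_of_ne hit with hlt | hgt
        · rw [(ih i hlt (by omega)).1, (ih i hlt (by omega)).2, zero_add, zero_mul]
        · have h1 : u i * (v (s - i) * p t) = 0 := by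
            rw [red_flip hred (hpv t (s - i) (by omega)), mul_zero]
          have h2 : p i * (q (s - i) * p t) = 0 := by
            rw [red_flip hred (hpq_low t (s - i) (by omega)), mul_zero]
          rw [add_mul, mul_assoc, mul_assoc, h1, h2, add_zero]
    have hptq : p t * q (s - t) * p t = 0 := by rw [← hsingle]; exact key
    exact hred _ (by
      rw [show p t * q (s - t) * (p t * q (s - t)) = (p t * q (s - t) * p t) * q (s - t) by
        noncomm_ring, hptq, zero_mul])

theorem quad (hred : ∀ x : R, x * x = 0 → x = 0) (a b c d : ℕ → R) (n : ℕ)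
    (h1 : ∀ k < n, ∑ i ∈ range (k + 1), a i * c (k - i) = 0)
    (h2 : ∀ k < n, ∑ i ∈ range (k + 1), (a i * d (k - i) + b i * c (k - i)) = 0)
    (h3 : ∀ k < n, ∑ i ∈ range (k + 1), b i * d (k - i) = 0) :
    ∀ i j, i + j < n → a i * c j = 0 ∧ b i * d j = 0 ∧ a i * d j = 0 ∧ b i * c j = 0 := by
  suffices H : ∀ s, s < n → ∀ i j, i + j = s →
      a i * c j = 0 ∧ b i * d j = 0 ∧ a i * d j = 0 ∧ b i * c j = 0 by
    intro i j hij
    exact H (i + j) hij i j rfl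
  intro s
  induction s using Nat.strong_induction_on with
  | _ s ih =>
    intro hs
    have hac_s : ∀ t, t ≤ s → a t * c (s - t) = 0 := by
      intro t ht
      refine (peel2 hred a c (fun _ => 0) (fun _ => 0) s (by simpa using h1 s hs)
        (fun i j h => (ih (i + j) (by omega) (by omega) i j rfl).1)
        (fun i j h => by simp) (fun i j h => by simp) (fun i j h => by simp) t ht).1
    have hbd_s : ∀ t, t ≤ s → b t * d (s - t) = 0 := by
      intro t ht
      refine (peel2 hred b d (fun _ => 0) (fun _ => 0) s (by simpa using h3 s hs)
        (fun i j h => (ih (i + j) (by omega) (by omega) i j rfl).2.1)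
        (fun i j h => by simp) (fun i j h => by simp) (fun i j h => by simp) t ht).1
    have hacLE : ∀ i j, i + j ≤ s → a i * c j = 0 := by
      intro i j h
      rcases lt_or_eq_of_le h with h' | h'
      · exact (ih (i + j) h' (by omega) i j rfl).1
      · have := hac_s i (by omega)
        rwa [show s - i = j by omega] at this
    have hbdLE : ∀ i j, i + j ≤ s → b i * d j = 0 := by
      intro i j h
      rcases lt_or_eq_of_le h with h' | h'
      · exact (ih (i + j) h' (by omega) i j rfl).2.1
      · have := hbd_s i (by omega)
        rwa [show s - i = j by omega] at this
    have hmix : ∀ t, t ≤ s → a t * d (s - t) = 0 ∧ b t * c (s - t) = 0 :=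
      peel2 hred a d b c s (h2 s hs)
        (fun i j h => (ih (i + j) (by omega) (by omega) i j rfl).2.2.1)
        (fun i j h => (ih (i + j) (by omega) (by omega) i j rfl).2.2.2)
        (fun i j h => hacLE i j h) (fun i j h => hbdLE i j h)
    intro i j hij
    have h1' := hacLE i j (le_of_eq hij)
    have h2' := hbdLE i j (le_of_eq hij)
    have h3' := hmix i (by omega)
    rw [show s - i = j by omega] at h3'
    exact ⟨h1', h2', h3'.1, h3'.2⟩

end AuxRed

section Shift
variable {R : Type*} [Ring R]

def shiftM (R : Type*) [Ring R] (n : ℕ) : Matrix (Fin n) (Fin n) R :=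
  fun i j => if (i : ℕ) + 1 = (j : ℕ) then 1 else 0

theorem shiftM_pow (n e : ℕ) (i j : Fin n) :
    ((shiftM R n) ^ e) i j = if (i : ℕ) + e = (j : ℕ) then 1 else 0 := by
  induction e generalizing j with
  | zero =>
    rw [pow_zero, Matrix.one_apply]
    by_cases h : i = j
    · subst h; simp
    · rw [if_neg h, if_neg (by simpa [Fin.ext_iff] using h)]
  | succ e ihe =>
    rw [pow_succ, Matrix.mul_apply]
    by_cases h : (i : ℕ) + e < n
    · have hterm : ∀ x : Fin n, x ∈ Finset.univ → x ≠ ⟨(i : ℕ) + e, h⟩ →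
          (shiftM R n ^ e) i x * shiftM R n x j = 0 := by
        intro x _ hx
        rw [ihe, if_neg (by simpa [Fin.ext_iff, eq_comm] using hx), zero_mul]
      rw [Finset.sum_eq_single_of_mem ⟨(i : ℕ) + e, h⟩ (Finset.mem_univ _) hterm, ihe]
      simp only [shiftM]
      rw [if_pos trivial, one_mul, Nat.add_assoc]
    · have hz : ∀ x : Fin n, (shiftM R n ^ e) i x * shiftM R n x j = 0 := by
        intro x
        rw [ihe, if_neg (by omega), zero_mul]
      rw [Finset.sum_congr rfl fun x _ => hz x, Finset.sum_const, smul_zero,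
        if_neg (by omega)]

theorem shiftM_commute (n : ℕ) (r : R) :
    Commute ((Matrix.scalar (Fin n)) r) (shiftM R n) := by
  show _ * _ = _ * _
  ext i j
  rw [Matrix.scalar_apply, Matrix.diagonal_mul, Matrix.mul_diagonal]
  simp only [shiftM]
  split <;> simp

theorem eval_entry (n : ℕ) (P : R[X]) (k : ℕ) (hk : k < n) (h0 : 0 < n) :
    (Polynomial.eval₂ (Matrix.scalar (Fin n)) (shiftM R n) P) ⟨0, h0⟩ ⟨k, hk⟩ = P.coeff k := by
  rw [eval₂_eq_sum, Polynomial.sum, Matrix.sum_apply]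
  have hterm : ∀ e ∈ P.support,
      ((Matrix.scalar (Fin n)) (P.coeff e) * shiftM R n ^ e) ⟨0, h0⟩ ⟨k, hk⟩
        = if e = k then P.coeff e else 0 := by
    intro e _
    rw [Matrix.scalar_apply, Matrix.diagonal_mul, shiftM_pow]
    simp only [zero_add, mul_ite, mul_one, mul_zero]
  rw [Finset.sum_congr rfl hterm, Finset.sum_ite_eq' P.support k (fun e => P.coeff e)]
  split
  · rfl
  · exact (Polynomial.notMem_support_iff.mp (by assumption)).symm

end Shift

theorem expand_lin {S : Type*} [Ring S] (α β γ δ : S) :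
    (C α + C β * X) * (C γ + C δ * X)
      = C (α * γ) + C (α * δ + β * γ) * X + C (β * δ) * X ^ 2 := by
  calc (C α + C β * X) * (C γ + C δ * X)
      = C α * C γ + C α * C δ * X + C β * (X * C γ) + C β * ((X * C δ) * X) := by noncomm_ring
    _ = C α * C γ + C α * C δ * X + C β * (C γ * X) + C β * ((C δ * X) * X) := by rw [X_mul, X_mul]
    _ = C (α * γ) + C (α * δ + β * γ) * X + C (β * δ) * X ^ 2 := by
        simp only [C_add, C_mul]; noncomm_ring

theorem quad_coeffs {S : Type*} [Ring S] {u v w : S}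
    (h : C u + C v * X + C w * X ^ 2 = 0) : u = 0 ∧ v = 0 ∧ w = 0 := by
  refine ⟨?_, ?_, ?_⟩
  · simpa using congrArg (fun p => coeff p 0) h
  · simpa using congrArg (fun p => coeff p 1) h
  · simpa using congrArg (fun p => coeff p 2) h


/-- For a semiprime ring `R` and `n ≥ 2`, `R` is central reduced iff
`R[x]/(xⁿ)` (the quotient of `R[x]` by the two-sided ideal generated by `xⁿ`)
is central linear Armendariz. -/
theorem stmt_19 (R : Type*) [Ring R] (n : ℕ) (hn : 2 ≤ n)
    (hsp : ∀ a : R, (∀ r : R, a * r * a = 0) → a = 0) :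
    (∀ a : R, IsNilpotent a → a ∈ Set.center R) ↔
      CentralLinearArmendariz
        (RingQuot (fun p q : Polynomial R => p = Polynomial.X ^ n ∧ q = 0)) := by
  have n0 : 0 < n := by omega
  set rel : R[X] → R[X] → Prop := fun p q => p = Polynomial.X ^ n ∧ q = 0 with hrel
  let π : R[X] →+* RingQuot rel := RingQuot.mkRingHom rel
  have hπXn : π (X ^ n) = 0 := by
    have h := RingQuot.mkRingHom_rel (r := rel) (x := (X : R[X]) ^ n) (y := 0) ⟨rfl, rfl⟩
    simpa using h
  let f : R[X] →+* Matrix (Fin n) (Fin n) R :=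
    eval₂RingHom' (Matrix.scalar (Fin n)) (shiftM R n) (fun a => shiftM_commute n a)
  have hJn : (shiftM R n) ^ n = 0 := by
    ext i j
    rw [shiftM_pow]
    rw [if_neg (by omega)]
    rfl
  have hfrel : ∀ ⦃x y : R[X]⦄, rel x y → f x = f y := by
    rintro x y ⟨hx, hy⟩
    subst hx; subst hy
    rw [map_zero, map_pow]
    have hfX : f X = shiftM R n := by simp [f, eval₂RingHom'_apply]
    rw [hfX, hJn]
  let σ : RingQuot rel →+* Matrix (Fin n) (Fin n) R := RingQuot.lift ⟨f, hfrel⟩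
  have hσ : ∀ P : R[X], σ (π P) = f P := fun P => RingQuot.lift_mkRingHom_apply f hfrel P
  have coeffπ : ∀ P : R[X], π P = 0 → ∀ k, k < n → P.coeff k = 0 := by
    intro P hP k hk
    have h1 : σ (π P) = 0 := by rw [hP, map_zero]
    rw [hσ] at h1
    have h2 := congrArg (fun M => M ⟨0, n0⟩ ⟨k, hk⟩) h1
    simp only [f, eval₂RingHom'_apply] at h2
    rw [eval_entry n P k hk n0] at h2
    simpa using h2
  have πzero : ∀ P : R[X], (∀ k, k < n → P.coeff k = 0) → π P = 0 := by
    intro P h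
    obtain ⟨Q, hQ⟩ := (X_pow_dvd_iff (n := n)).mpr (fun d hd => h d hd)
    rw [hQ, map_mul, hπXn, zero_mul]
  constructor
  · -- central reduced → CLA
    intro hcr
    have hred : ∀ x : R, x * x = 0 → x = 0 := by
      intro x hx
      have hc := hcr x ⟨2, by rw [pow_two, hx]⟩
      rw [Semigroup.mem_center_iff] at hc
      refine hsp x (fun r => ?_)
      rw [hc (x * r), ← mul_assoc, hx, zero_mul]
    intro α β γ δ heq
    rw [expand_lin] at heq
    obtain ⟨e0, e1, e2⟩ := quad_coeffs heq
    obtain ⟨A, rfl⟩ := RingQuot.mkRingHom_surjective rel α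
    obtain ⟨B, rfl⟩ := RingQuot.mkRingHom_surjective rel β
    obtain ⟨Cp, rfl⟩ := RingQuot.mkRingHom_surjective rel γ
    obtain ⟨D, rfl⟩ := RingQuot.mkRingHom_surjective rel δ
    have E0 : π (A * Cp) = 0 := by rw [map_mul]; exact e0
    have E2 : π (B * D) = 0 := by rw [map_mul]; exact e2
    have E1 : π (A * D + B * Cp) = 0 := by rw [map_add, map_mul, map_mul]; exact e1
    have H1 : ∀ k, k < n → ∑ i ∈ range (k + 1), A.coeff i * Cp.coeff (k - i) = 0 := by
      intro k hk
      have := coeffπ _ E0 k hk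
      rwa [coeff_mul, Finset.Nat.sum_antidiagonal_eq_sum_range_succ_mk] at this
    have H3 : ∀ k, k < n → ∑ i ∈ range (k + 1), B.coeff i * D.coeff (k - i) = 0 := by
      intro k hk
      have := coeffπ _ E2 k hk
      rwa [coeff_mul, Finset.Nat.sum_antidiagonal_eq_sum_range_succ_mk] at this
    have H2 : ∀ k, k < n →
        ∑ i ∈ range (k + 1), (A.coeff i * D.coeff (k - i) + B.coeff i * Cp.coeff (k - i)) = 0 := by
      intro k hk
      have := coeffπ _ E1 k hk
      rw [coeff_add, coeff_mul, coeff_mul, Finset.Nat.sum_antidiagonal_eq_sum_range_succ_mk,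
        Finset.Nat.sum_antidiagonal_eq_sum_range_succ_mk, ← Finset.sum_add_distrib] at this
      exact this
    have key := quad hred A.coeff B.coeff Cp.coeff D.coeff n
      (fun k hk => H1 k hk) (fun k hk => H2 k hk) (fun k hk => H3 k hk)
    have PAD : π A * π D = 0 := by
      rw [← map_mul]
      refine πzero _ (fun k hk => ?_)
      rw [coeff_mul, Finset.Nat.sum_antidiagonal_eq_sum_range_succ_mk]
      refine Finset.sum_eq_zero (fun i hi => ?_)
      have hi' := Finset.mem_range.mp hi
      exact (key i (k - i) (by omega)).2.2.1
    have PBC : π B * π Cp = 0 := by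
      rw [← map_mul]
      refine πzero _ (fun k hk => ?_)
      rw [coeff_mul, Finset.Nat.sum_antidiagonal_eq_sum_range_succ_mk]
      refine Finset.sum_eq_zero (fun i hi => ?_)
      have hi' := Finset.mem_range.mp hi
      exact (key i (k - i) (by omega)).2.2.2
    exact ⟨by rw [e0]; exact Set.zero_mem_center,
      by rw [PAD]; exact Set.zero_mem_center,
      by rw [PBC]; exact Set.zero_mem_center,
      by rw [e2]; exact Set.zero_mem_center⟩
  · -- CLA → central reduced
    intro hcla
    have hred : ∀ x : R, x * x = 0 → x = 0 := by
      intro x hx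
      have hCx2 : (Polynomial.C x : R[X]) * Polynomial.C x = 0 := by
        rw [← C_mul, hx, C_0]
      set α := π (Polynomial.C x) with hα
      set β := π (Polynomial.C x - Polynomial.X ^ (n - 1)) with hβ
      set δ := π (Polynomial.C x + Polynomial.X ^ (n - 1)) with hδ
      have h0 : α * α = 0 := by rw [hα, ← map_mul, hCx2, map_zero]
      have h1 : α * δ + β * α = 0 := by
        rw [hα, hβ, hδ, ← map_mul, ← map_mul, ← map_add]
        have hpoly : Polynomial.C x * (Polynomial.C x + Polynomial.X ^ (n - 1))
            + (Polynomial.C x - Polynomial.X ^ (n - 1)) * Polynomial.C x = 0 := by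
          have hcomm : (Polynomial.X : R[X]) ^ (n - 1) * Polynomial.C x
              = Polynomial.C x * Polynomial.X ^ (n - 1) := X_pow_mul
          calc Polynomial.C x * (Polynomial.C x + Polynomial.X ^ (n - 1))
              + (Polynomial.C x - Polynomial.X ^ (n - 1)) * Polynomial.C x
              = Polynomial.C x * Polynomial.C x + Polynomial.C x * Polynomial.C x
                + (Polynomial.C x * Polynomial.X ^ (n - 1)
                  - Polynomial.X ^ (n - 1) * Polynomial.C x) := by noncomm_ring
            _ = 0 := by rw [hcomm, hCx2, sub_self, add_zero, add_zero]
        rw [hpoly, map_zero]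
      have h2 : β * δ = 0 := by
        rw [hβ, hδ, ← map_mul]
        have hpoly : (Polynomial.C x - Polynomial.X ^ (n - 1))
            * (Polynomial.C x + Polynomial.X ^ (n - 1))
            = Polynomial.X ^ n * (-(Polynomial.X ^ (n - 2))) := by
          have hcomm : (Polynomial.X : R[X]) ^ (n - 1) * Polynomial.C x
              = Polynomial.C x * Polynomial.X ^ (n - 1) := X_pow_mul
          have hXX : (Polynomial.X : R[X]) ^ (n - 1) * Polynomial.X ^ (n - 1)
              = Polynomial.X ^ n * Polynomial.X ^ (n - 2) := by
            rw [← pow_add, ← pow_add]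
            congr 1
            omega
          calc (Polynomial.C x - Polynomial.X ^ (n - 1))
              * (Polynomial.C x + Polynomial.X ^ (n - 1))
              = Polynomial.C x * Polynomial.C x
                + (Polynomial.C x * Polynomial.X ^ (n - 1)
                  - Polynomial.X ^ (n - 1) * Polynomial.C x)
                - Polynomial.X ^ (n - 1) * Polynomial.X ^ (n - 1) := by noncomm_ring
            _ = Polynomial.X ^ n * (-(Polynomial.X ^ (n - 2))) := by
                rw [hcomm, hCx2, sub_self, add_zero, zero_sub, hXX, ← mul_neg]
        rw [hpoly, map_mul, hπXn, zero_mul]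
      have heq : (C α + C β * X) * (C α + C δ * X) = 0 := by
        rw [expand_lin, h0, h1, h2]; simp
      have hcent := (hcla α β α δ heq).2.1
      have hαδ : α * δ = π (Polynomial.C x * Polynomial.X ^ (n - 1)) := by
        rw [hα, hδ, ← map_mul]
        congr 1
        rw [mul_add, hCx2, zero_add]
      rw [Semigroup.mem_center_iff] at hcent
      have hxc : ∀ rr : R, rr * x = x * rr := by
        intro rr
        have hcr := hcent (π (Polynomial.C rr))
        rw [hαδ, ← map_mul, ← map_mul] at hcr
        have l1 : (Polynomial.C rr : R[X]) * (Polynomial.C x * Polynomial.X ^ (n - 1))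
            = Polynomial.C (rr * x) * Polynomial.X ^ (n - 1) := by
          rw [← mul_assoc, ← C_mul]
        have l2 : (Polynomial.C x * Polynomial.X ^ (n - 1)) * Polynomial.C rr
            = Polynomial.C (x * rr) * Polynomial.X ^ (n - 1) := by
          rw [mul_assoc, X_pow_mul, ← mul_assoc, ← C_mul]
        rw [l1, l2] at hcr
        have hz : π ((Polynomial.C (rr * x) - Polynomial.C (x * rr)) * Polynomial.X ^ (n - 1))
            = 0 := by
          rw [sub_mul, map_sub, hcr, sub_self]
        have hc := coeffπ _ hz (n - 1) (by omega)
        have : ((Polynomial.C (rr * x) - Polynomial.C (x * rr))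
            * Polynomial.X ^ (n - 1)).coeff (0 + (n - 1)) = rr * x - x * rr := by
          rw [coeff_mul_X_pow, coeff_sub, coeff_C_zero, coeff_C_zero]
        rw [zero_add] at this
        rw [this] at hc
        exact sub_eq_zero.mp hc
      refine hsp x (fun rr => ?_)
      rw [mul_assoc, hxc rr, ← mul_assoc, hx, zero_mul]
    have hpow : ∀ m (x : R), x ^ m = 0 → x = 0 := by
      intro m
      induction m using Nat.strong_induction_on with
      | _ m ih =>
        intro x hxm
        match m, ih, hxm with
        | 0, ih, hxm => rw [pow_zero] at hxm; rw [← mul_one x, hxm, mul_zero]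
        | 1, ih, hxm => rwa [pow_one] at hxm
        | (m + 2), ih, hxm =>
          have hsq : x ^ (m + 1) * x ^ (m + 1) = 0 := by
            rw [← pow_add, show m + 1 + (m + 1) = (m + 2) + m by omega, pow_add, hxm, zero_mul]
          exact ih (m + 1) (by omega) x (hred _ hsq)
    intro a ⟨m, hm⟩
    rw [hpow m a hm]
    exact Set.zero_mem_center
end
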